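/- arXiv:1905.07577 — 9 statements merged into one kernel-verified Lean document; each statement's English description precedes it below -/
import Mathlib

section
/- Let 𝒜 be a prime unital ∗-algebra over ℂ containing a nontrivial projection P₁, and let Φ : 𝒜 → 𝒜 be a nonlinear ⋄-derivation such that Φ(I/2) and Φ(iI/2) are self-adjoint. Then Φ is an additive ∗-derivation: Φ(A + B) = Φ(A) + Φ(B), Φ(AB) = Φ(A)B + AΦ(B), and Φ(A*) = Φ(A)* for all A, B ∈ 𝒜. -/
set_option linter.unusedSectionVars false
set_option maxHeartbeats 1000000

section DiamondAux

variable {𝒜 : Type*} [Ring 𝒜] [Algebra ℂ 𝒜] [StarRing 𝒜] [StarModule ℂ 𝒜]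

/-- The skew product `A ⋄ B = A*B − B*A`. -/
def dprod (A B : 𝒜) : 𝒜 := star A * B - star B * A

lemma dprod_add_right (C u v : 𝒜) : dprod C (u + v) = dprod C u + dprod C v := by
  simp only [dprod, star_add, mul_add, add_mul]; abel

lemma dprod_add_left (u v C : 𝒜) : dprod (u + v) C = dprod u C + dprod v C := by
  simp only [dprod, star_add, mul_add, add_mul]; abel

lemma dprod_sub3 (C x y z : 𝒜) : dprod C (x - y - z) = dprod C x - dprod C y - dprod C z := by
  simp only [dprod, star_sub, mul_sub, sub_mul]; abel

lemma dprod_sub4 (C x y z w : 𝒜) :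
    dprod C (x - y - z - w) = dprod C x - dprod C y - dprod C z - dprod C w := by
  simp only [dprod, star_sub, mul_sub, sub_mul]; abel

lemma dprod_zero_right (C : 𝒜) : dprod C 0 = 0 := by simp [dprod]

lemma dprod_zero_left (C : 𝒜) : dprod 0 C = 0 := by simp [dprod]

/-- From `C ⋄ T = 0` and `(iC) ⋄ T = 0` deduce `C* T = 0`. -/
lemma starmul_eq_zero_of_dprod (C T : 𝒜) (h1 : dprod C T = 0)
    (h2 : dprod (Complex.I • C) T = 0) : star C * T = 0 := by
  have e2 : dprod (Complex.I • C) T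
      = -(Complex.I • (star C * T + star T * C)) := by
    simp only [dprod, star_smul, Complex.star_def, Complex.conj_I, neg_smul,
      smul_mul_assoc, mul_smul_comm, smul_add, neg_mul]
    abel
  rw [e2, neg_eq_zero] at h2
  have e3 : star C * T + star T * C = 0 := by
    have := congrArg (fun w => (Complex.I)⁻¹ • w) h2
    simpa [smul_smul, inv_mul_cancel₀ Complex.I_ne_zero] using this
  have e4 : star C * T - star T * C = 0 := h1
  have e5 : (2:ℂ) • (star C * T) = 0 := by
    rw [two_smul]
    calc star C * T + star C * T
        = (star C * T + star T * C) + (star C * T - star T * C) := by abel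
      _ = 0 := by rw [e3, e4, add_zero]
  have := congrArg (fun w => ((2:ℂ)⁻¹) • w) e5
  simpa [smul_smul] using this

lemma Tlem2 (Φ : 𝒜 → 𝒜) (hΦd : ∀ A B, Φ (dprod A B) = dprod (Φ A) B + dprod A (Φ B))
    (C u v : 𝒜) :
    dprod C (Φ (u+v) - Φ u - Φ v)
      = Φ (dprod C (u+v)) - Φ (dprod C u) - Φ (dprod C v) := by
  have f : ∀ w, dprod C (Φ w) = Φ (dprod C w) - dprod (Φ C) w := fun w => by
    rw [hΦd]; abel
  rw [dprod_sub3, f, f, f, dprod_add_right, dprod_add_right (Φ C) u v]; abel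

lemma Tlem3 (Φ : 𝒜 → 𝒜) (hΦd : ∀ A B, Φ (dprod A B) = dprod (Φ A) B + dprod A (Φ B))
    (C u v w : 𝒜) :
    dprod C (Φ (u+v+w) - Φ u - Φ v - Φ w)
      = Φ (dprod C (u+v+w)) - Φ (dprod C u) - Φ (dprod C v) - Φ (dprod C w) := by
  have f : ∀ y, dprod C (Φ y) = Φ (dprod C y) - dprod (Φ C) y := fun y => by
    rw [hΦd]; abel
  rw [dprod_sub4, f, f, f, f, dprod_add_right, dprod_add_right,
    dprod_add_right (Φ C) (u+v) w, dprod_add_right (Φ C) u v]; abel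

end DiamondAux


/-- Let `𝒜` be a prime unital ∗-algebra over `ℂ` containing a nontrivial
projection `P₁`, and let `Φ : 𝒜 → 𝒜` be a nonlinear `⋄`-derivation
(`Φ(A ⋄ B) = Φ(A) ⋄ B + A ⋄ Φ(B)` where `A ⋄ B = A*B − B*A`) such that `Φ(I/2)` and
`Φ(iI/2)` are self-adjoint.  Then `Φ` is an additive ∗-derivation. -/
theorem stmt0 {𝒜 : Type*} [Ring 𝒜] [Algebra ℂ 𝒜] [StarRing 𝒜] [StarModule ℂ 𝒜]
    (hprime : ∀ a b : 𝒜, (∀ x : 𝒜, a * x * b = 0) → a = 0 ∨ b = 0)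
    (P₁ : 𝒜) (hP₁star : star P₁ = P₁) (hP₁idem : P₁ * P₁ = P₁)
    (hP₁ne0 : P₁ ≠ 0) (hP₁ne1 : P₁ ≠ 1)
    (Φ : 𝒜 → 𝒜)
    (hΦ : ∀ A B : 𝒜, Φ (star A * B - star B * A) =
      (star (Φ A) * B - star B * Φ A) + (star A * Φ B - star (Φ B) * A))
    (h1 : star (Φ (((1 : ℂ)/2) • (1 : 𝒜))) = Φ (((1 : ℂ)/2) • (1 : 𝒜)))
    (h2 : star (Φ ((Complex.I/2) • (1 : 𝒜))) = Φ ((Complex.I/2) • (1 : 𝒜))) :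
    (∀ A B : 𝒜, Φ (A + B) = Φ A + Φ B) ∧
    (∀ A B : 𝒜, Φ (A * B) = Φ A * B + A * Φ B) ∧
    (∀ A : 𝒜, Φ (star A) = star (Φ A)) := by
  have hΦd : ∀ A B : 𝒜, Φ (dprod A B) = dprod (Φ A) B + dprod A (Φ B) := fun A B => hΦ A B
  set ω : 𝒜 := ((1:ℂ)/2) • (1:𝒜) with hωdef
  set γ : 𝒜 := (Complex.I/2) • (1:𝒜) with hγdef
  have hΦ0 : Φ 0 = 0 := by
    have h := hΦd 0 0
    simpa [dprod] using h
  -- scalar helpers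
  have hhalfstar : (starRingEnd ℂ) ((1:ℂ)/2) = (1:ℂ)/2 := by
    rw [map_div₀, map_one, map_ofNat]
  have hIhalfstar : (starRingEnd ℂ) (Complex.I/2) = -(Complex.I/2) := by
    rw [map_div₀, Complex.conj_I, map_ofNat, neg_div]
  have hcancel2 : ∀ x : 𝒜, x + x = 0 → x = 0 := by
    intro x hx
    have h : (2:ℂ) • x = 0 := by rw [two_smul]; exact hx
    have := congrArg (fun w => ((2:ℂ)⁻¹) • w) h
    simpa [smul_smul] using this
  have hcancelI : ∀ x y : 𝒜, Complex.I • x = Complex.I • y → x = y := by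
    intro x y hxy
    have := congrArg (fun w => (Complex.I)⁻¹ • w) hxy
    simpa [smul_smul, inv_mul_cancel₀ Complex.I_ne_zero] using this
  have hcancelI0 : ∀ x : 𝒜, Complex.I • x = 0 → x = 0 := by
    intro x hx
    have := hcancelI x 0 (by rw [hx, smul_zero])
    exact this
  have hcancelhalf0 : ∀ x : 𝒜, ((1:ℂ)/2) • x = 0 → x = 0 := by
    intro x hx
    have h2' : ((1:ℂ)/2)⁻¹ * ((1:ℂ)/2) = 1 := by norm_num
    have := congrArg (fun w => (((1:ℂ)/2)⁻¹) • w) hx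
    simpa [smul_smul, h2'] using this
  -- dprod with ω and γ
  have hdω : ∀ B : 𝒜, dprod ω B = ((1:ℂ)/2) • (B - star B) := by
    intro B
    simp [dprod, hωdef, star_smul, hhalfstar, smul_mul_assoc, mul_smul_comm, smul_sub]
  have hdγ : ∀ B : 𝒜, dprod γ B = -((Complex.I/2) • (B + star B)) := by
    intro B
    simp only [dprod, hγdef, star_smul, Complex.star_def, hIhalfstar, star_one,
      neg_smul, smul_mul_assoc, mul_smul_comm, smul_add, neg_mul, one_mul, mul_one]
    abel
  have hdγ' : ∀ B : 𝒜, dprod B γ = (Complex.I/2) • (B + star B) := by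
    intro B
    simp only [dprod, hγdef, star_smul, Complex.star_def, hIhalfstar, star_one,
      neg_smul, smul_mul_assoc, mul_smul_comm, smul_add, neg_mul, one_mul, mul_one]
    abel
  -- basic identities
  have hsa0 : ∀ S : 𝒜, star S = S →
      dprod (Φ ω) S + ((1:ℂ)/2) • (Φ S - star (Φ S)) = 0 := by
    intro S hS
    have h := hΦd ω S
    rw [hdω S, hdω (Φ S), hS] at h
    simp only [sub_self, smul_zero, hΦ0] at h
    exact h.symm
  have hK0 : ∀ K : 𝒜, star K = -K →
      Φ K = dprod (Φ ω) K + ((1:ℂ)/2) • (Φ K - star (Φ K)) := by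
    intro K hK
    have h := hΦd ω K
    rw [hdω K, hdω (Φ K), hK] at h
    have e : ((1:ℂ)/2) • (K - -K) = K := by
      rw [sub_neg_eq_add, ← two_smul ℂ K, smul_smul]; norm_num
    rw [e] at h; exact h
  have hKplus : ∀ K : 𝒜, star K = -K →
      ((1:ℂ)/2) • (Φ K + star (Φ K)) = Φ ω * K + K * Φ ω := by
    intro K hK
    have h := hK0 K hK
    have e : dprod (Φ ω) K = Φ ω * K + K * Φ ω := by
      simp only [dprod]; rw [h1, hK]; simp only [neg_mul, sub_neg_eq_add]
    rw [e] at h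
    have e2 : ((1:ℂ)/2) • (Φ K + star (Φ K))
        = Φ K - ((1:ℂ)/2) • (Φ K - star (Φ K)) := by module
    rw [e2]; nth_rewrite 1 [h]; module
  have hK4 : ∀ S : 𝒜, star S = S →
      Φ (Complex.I • S) = (Complex.I/2) • (Φ S + star (Φ S)) + dprod S (Φ γ) := by
    intro S hS
    have h := hΦd S γ
    rw [hdγ' S, hdγ' (Φ S), hS] at h
    have e : (Complex.I/2) • (S + S) = Complex.I • S := by
      rw [← two_smul ℂ S, smul_smul]; congr 1; ring
    rw [e] at h; exact h
  -- Φ ω = 0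
  have hcomm : ∀ S : 𝒜, star S = S → Φ ω * S + S * Φ ω = 0 := by
    intro S hS
    have hskewIS : star (Complex.I • S) = -(Complex.I • S) := by
      rw [star_smul, Complex.star_def, Complex.conj_I, hS, neg_smul]
    have h2' := hKplus (Complex.I • S) hskewIS
    have h4 := hK4 S hS
    have hds : star (dprod S (Φ γ)) = -(dprod S (Φ γ)) := by
      simp only [dprod, star_sub, star_mul, star_star, hS, h2]
      abel
    have hstar4 : Φ (Complex.I • S) + star (Φ (Complex.I • S)) = 0 := by
      rw [h4, star_add, hds, star_smul, Complex.star_def, hIhalfstar, star_add, star_star]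
      module
    rw [hstar4, smul_zero] at h2'
    have e : Φ ω * (Complex.I • S) + (Complex.I • S) * Φ ω
        = Complex.I • (Φ ω * S + S * Φ ω) := by
      rw [mul_smul_comm, smul_mul_assoc, smul_add]
    rw [e] at h2'
    exact hcancelI0 _ h2'.symm
  have hω0 : Φ ω = 0 := by
    have h := hcomm 1 (star_one 𝒜)
    simp only [mul_one, one_mul] at h
    exact hcancel2 _ h
  have hsa1 : ∀ S : 𝒜, star S = S → star (Φ S) = Φ S := by
    intro S hS
    have h := hsa0 S hS
    rw [hω0, dprod_zero_left, zero_add] at h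
    have h3 := hcancelhalf0 _ h
    rw [sub_eq_zero] at h3
    exact h3.symm
  have hskew1 : ∀ K : 𝒜, star K = -K → star (Φ K) = -(Φ K) := by
    intro K hK
    have h := hKplus K hK
    rw [hω0, zero_mul, mul_zero, add_zero] at h
    have h3 := hcancelhalf0 _ h
    exact eq_neg_of_add_eq_zero_right h3
  have hγ0 : Φ γ = 0 := by
    have hanti : ∀ K : 𝒜, star K = -K → Φ γ * K + K * Φ γ = 0 := by
      intro K hK
      have h := hΦd γ K
      rw [hdγ K, hdγ (Φ K), hK, hskew1 K hK] at h
      simp only [add_neg_cancel, smul_zero, neg_zero, hΦ0, add_zero] at h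
      have e : dprod (Φ γ) K = Φ γ * K + K * Φ γ := by
        simp only [dprod]; rw [h2, hK]; simp only [neg_mul, sub_neg_eq_add]
      rw [e] at h
      exact h.symm
    have hKI : star (Complex.I • (1:𝒜)) = -(Complex.I • (1:𝒜)) := by
      rw [star_smul, Complex.star_def, Complex.conj_I, star_one, neg_smul]
    have h := hanti _ hKI
    rw [mul_smul_comm, smul_mul_assoc, mul_one, one_mul, ← smul_add] at h
    exact hcancel2 _ (hcancelI0 _ h)
  -- the two key identities
  have keyK : ∀ B : 𝒜, Φ (((1:ℂ)/2) • (B - star B)) = ((1:ℂ)/2) • (Φ B - star (Φ B)) := by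
    intro B
    have h := hΦd ω B
    rw [hdω B, hdω (Φ B), hω0, dprod_zero_left, zero_add] at h
    exact h
  have keyI : ∀ S : 𝒜, star S = S → Φ (Complex.I • S) = Complex.I • Φ S := by
    intro S hS
    have h := hK4 S hS
    rw [hγ0, dprod_zero_right, add_zero, hsa1 S hS] at h
    rw [h, ← two_smul ℂ (Φ S), smul_smul]
    congr 1; ring
  have keyS : ∀ A : 𝒜, Φ (((1:ℂ)/2) • (A + star A)) = ((1:ℂ)/2) • (Φ A + star (Φ A)) := by
    intro A
    have h := hΦd A γ
    rw [hdγ' A, hdγ' (Φ A), hγ0, dprod_zero_right, add_zero] at h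
    have e : ∀ X : 𝒜, (Complex.I/2) • X = Complex.I • (((1:ℂ)/2) • X) := by
      intro X; rw [smul_smul]; congr 1; ring
    rw [e, e] at h
    have hSsa : star (((1:ℂ)/2) • (A + star A)) = ((1:ℂ)/2) • (A + star A) := by
      rw [star_smul, Complex.star_def, hhalfstar, star_add, star_star, add_comm]
    rw [keyI _ hSsa] at h
    exact hcancelI _ _ h
  have hsaA : ∀ A : 𝒜, star (((1:ℂ)/2) • (A + star A)) = ((1:ℂ)/2) • (A + star A) := by
    intro A; rw [star_smul, Complex.star_def, hhalfstar, star_add, star_star, add_comm]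
  have hskA : ∀ A : 𝒜, star (((1:ℂ)/2) • (A - star A)) = -(((1:ℂ)/2) • (A - star A)) := by
    intro A; rw [star_smul, Complex.star_def, hhalfstar, star_sub, star_star]
    module
  have hsplit : ∀ A : 𝒜,
      Φ A = Φ (((1:ℂ)/2) • (A + star A)) + Φ (((1:ℂ)/2) • (A - star A)) := by
    intro A; rw [keyS, keyK]; module
  have hsplitSK : ∀ S K : 𝒜, star S = S → star K = -K → Φ (S + K) = Φ S + Φ K := by
    intro S K hS hK
    have h := hsplit (S + K)
    have e1 : ((1:ℂ)/2) • ((S + K) + star (S + K)) = S := by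
      rw [star_add, hS, hK]; module
    have e2 : ((1:ℂ)/2) • ((S + K) - star (S + K)) = K := by
      rw [star_add, hS, hK]; module
    rw [e1, e2] at h; exact h
  have hnegsa : ∀ S : 𝒜, star S = S → Φ (-S) = -Φ S := by
    intro S hS
    have h := hΦd γ S
    rw [hdγ S, hdγ (Φ S), hγ0, dprod_zero_left, zero_add, hS, hsa1 S hS] at h
    have e : ∀ X : 𝒜, -((Complex.I/2) • (X + X)) = Complex.I • (-X) := by
      intro X
      have e' : (Complex.I/2) • (X + X) = Complex.I • X := by
        rw [← two_smul ℂ X, smul_smul]; congr 1; ring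
      rw [e', ← smul_neg]
    rw [e S, e (Φ S)] at h
    have h2' := keyI (-S) (by rw [star_neg, hS])
    rw [h2'] at h
    exact hcancelI _ _ h
  have hIskew : ∀ K : 𝒜, star K = -K → Φ (Complex.I • K) = Complex.I • Φ K := by
    intro K hK
    have hSsa : star ((-Complex.I) • K) = (-Complex.I) • K := by
      rw [star_smul, Complex.star_def, map_neg, Complex.conj_I, neg_neg, hK, smul_neg,
        neg_smul]
    have e1 : Complex.I • ((-Complex.I) • K) = K := by
      rw [smul_smul, mul_neg, Complex.I_mul_I, neg_neg, one_smul]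
    have h2' := keyI _ hSsa
    rw [e1] at h2'
    -- h2' : Φ K = I • Φ ((−I)•K)
    calc Φ (Complex.I • K) = Φ (-((-Complex.I) • K)) := by rw [neg_smul, neg_neg]
      _ = -Φ ((-Complex.I) • K) := hnegsa _ hSsa
      _ = Complex.I • Φ K := by
          rw [h2', smul_smul, Complex.I_mul_I, neg_one_smul]
  have hJΦ : ∀ A : 𝒜, Φ (Complex.I • A) = Complex.I • Φ A := by
    intro A
    have h := hsplit (Complex.I • A)
    have hstarIA : star (Complex.I • A) = -(Complex.I • star A) := by
      rw [star_smul, Complex.star_def, Complex.conj_I, neg_smul]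
    have e1 : ((1:ℂ)/2) • ((Complex.I • A) + star (Complex.I • A))
        = Complex.I • (((1:ℂ)/2) • (A - star A)) := by
      rw [hstarIA]; module
    have e2 : ((1:ℂ)/2) • ((Complex.I • A) - star (Complex.I • A))
        = Complex.I • (((1:ℂ)/2) • (A + star A)) := by
      rw [hstarIA]; module
    rw [e1, e2] at h
    rw [hIskew _ (hskA A), keyI _ (hsaA A)] at h
    rw [h, hsplit A]; module
  have hneg : ∀ A : 𝒜, Φ (-A) = -Φ A := by
    intro A
    have h := hJΦ (Complex.I • A)
    rw [smul_smul, Complex.I_mul_I, neg_one_smul, hJΦ A, smul_smul, Complex.I_mul_I,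
      neg_one_smul] at h
    exact h
  have hstarΦ : ∀ A : 𝒜, Φ (star A) = star (Φ A) := by
    intro A
    have h := hsplit (star A)
    have e1 : ((1:ℂ)/2) • ((star A) + star (star A)) = ((1:ℂ)/2) • (A + star A) := by
      rw [star_star, add_comm]
    have e2 : ((1:ℂ)/2) • ((star A) - star (star A)) = -(((1:ℂ)/2) • (A - star A)) := by
      rw [star_star]; module
    rw [e1, e2, hneg] at h
    rw [h, hsplit A, star_add, hsa1 _ (hsaA A), hskew1 _ (hskA A)]
  -- projections
  obtain ⟨P, hPdef⟩ : ∃ W : 𝒜, W = P₁ := ⟨P₁, rfl⟩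
  obtain ⟨Q, hQdef⟩ : ∃ W : 𝒜, W = 1 - P := ⟨1 - P, rfl⟩
  have sP : star P = P := by rw [hPdef]; exact hP₁star
  have pPP : P * P = P := by rw [hPdef]; exact hP₁idem
  have hPne0 : P ≠ 0 := by rw [hPdef]; exact hP₁ne0
  have sQ : star Q = Q := by rw [hQdef, star_sub, star_one, sP]
  have pPQ : P * Q = 0 := by rw [hQdef, mul_sub, mul_one, pPP, sub_self]
  have pQP : Q * P = 0 := by rw [hQdef, sub_mul, one_mul, pPP, sub_self]
  have pQQ : Q * Q = Q := by
    nth_rewrite 1 [hQdef]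
    rw [sub_mul, one_mul, pPQ, sub_zero]
  have pPQ1 : P + Q = 1 := by rw [hQdef]; abel
  have hQne0 : Q ≠ 0 := by
    intro h
    apply hP₁ne1
    rw [h, hPdef] at hQdef
    have := sub_eq_zero.mp hQdef.symm
    exact this.symm
  have aPP : ∀ w : 𝒜, P*(P*w) = P*w := fun w => by rw [← mul_assoc, pPP]
  have aPQ : ∀ w : 𝒜, P*(Q*w) = 0 := fun w => by rw [← mul_assoc, pPQ, zero_mul]
  have aQP : ∀ w : 𝒜, Q*(P*w) = 0 := fun w => by rw [← mul_assoc, pQP, zero_mul]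
  have aQQ : ∀ w : 𝒜, Q*(Q*w) = Q*w := fun w => by rw [← mul_assoc, pQQ]
  have prQ : ∀ W : 𝒜, (∀ x : 𝒜, Q * x * W = 0) → W = 0 := by
    intro W hW
    rcases hprime Q W hW with h | h
    · exact absurd h hQne0
    · exact h
  have prP : ∀ W : 𝒜, (∀ x : 𝒜, P * x * W = 0) → W = 0 := by
    intro W hW
    rcases hprime P W hW with h | h
    · exact absurd h hPne0
    · exact h
  have prRP : ∀ W : 𝒜, (∀ x : 𝒜, W * x * P = 0) → W = 0 := by
    intro W hW
    rcases hprime W P hW with h | h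
    · exact h
    · exact absurd h hPne0
  have prRQ : ∀ W : 𝒜, (∀ x : 𝒜, W * x * Q = 0) → W = 0 := by
    intro W hW
    rcases hprime W Q hW with h | h
    · exact h
    · exact absurd h hQne0
  -- extraction lemmas
  have extPQ : ∀ T : 𝒜, (∀ x : 𝒜, dprod (P*x*Q) T = 0) → P * T = 0 := by
    intro T hT
    have hs : ∀ x : 𝒜, star (P*x*Q) * T = 0 := by
      intro x
      apply starmul_eq_zero_of_dprod _ _ (hT x)
      have e : Complex.I • (P*x*Q) = P*(Complex.I • x)*Q := by
        rw [mul_smul_comm, smul_mul_assoc]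
      rw [e]; exact hT _
    apply prQ
    intro y
    have := hs (star y)
    simpa [star_mul, sP, sQ, star_star, mul_assoc] using this
  have extQP : ∀ T : 𝒜, (∀ x : 𝒜, dprod (Q*x*P) T = 0) → Q * T = 0 := by
    intro T hT
    have hs : ∀ x : 𝒜, star (Q*x*P) * T = 0 := by
      intro x
      apply starmul_eq_zero_of_dprod _ _ (hT x)
      have e : Complex.I • (Q*x*P) = Q*(Complex.I • x)*P := by
        rw [mul_smul_comm, smul_mul_assoc]
      rw [e]; exact hT _
    apply prP
    intro y
    have := hs (star y)
    simpa [star_mul, sP, sQ, star_star, mul_assoc] using this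
  have extPP : ∀ T : 𝒜, (∀ x : 𝒜, dprod (P*x*P) T = 0) → P * T = 0 := by
    intro T hT
    have hs : ∀ x : 𝒜, star (P*x*P) * T = 0 := by
      intro x
      apply starmul_eq_zero_of_dprod _ _ (hT x)
      have e : Complex.I • (P*x*P) = P*(Complex.I • x)*P := by
        rw [mul_smul_comm, smul_mul_assoc]
      rw [e]; exact hT _
    apply prP
    intro y
    have := hs (star y)
    simpa [star_mul, sP, sQ, star_star, mul_assoc] using this
  have extQQ : ∀ T : 𝒜, (∀ x : 𝒜, dprod (Q*x*Q) T = 0) → Q * T = 0 := by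
    intro T hT
    have hs : ∀ x : 𝒜, star (Q*x*Q) * T = 0 := by
      intro x
      apply starmul_eq_zero_of_dprod _ _ (hT x)
      have e : Complex.I • (Q*x*Q) = Q*(Complex.I • x)*Q := by
        rw [mul_smul_comm, smul_mul_assoc]
      rw [e]; exact hT _
    apply prQ
    intro y
    have := hs (star y)
    simpa [star_mul, sP, sQ, star_star, mul_assoc] using this
  have hPQsplit : ∀ T : 𝒜, P*T = 0 → Q*T = 0 → T = 0 := by
    intro T ha hb
    calc T = (P+Q)*T := by rw [pPQ1, one_mul]
      _ = P*T + Q*T := by rw [add_mul]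
      _ = 0 := by rw [ha, hb, add_zero]
  -- pair claims
  have C1221 : ∀ a b : 𝒜, Φ (P*a*Q + Q*b*P) = Φ (P*a*Q) + Φ (Q*b*P) := by
    intro a b
    have f1 : ∀ x : 𝒜,
        dprod (P*x*Q) (Φ (P*a*Q + Q*b*P) - Φ (P*a*Q) - Φ (Q*b*P)) = 0 := by
      intro x
      have hz : dprod (P*x*Q) (Q*b*P) = 0 := by
        simp [dprod, star_mul, sP, sQ, mul_assoc, aPP, aPQ, aQP, aQQ, pPP, pPQ, pQP, pQQ]
      rw [Tlem2 Φ hΦd, dprod_add_right, hz, add_zero, hΦ0]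
      abel
    have f2 : ∀ x : 𝒜,
        dprod (Q*x*P) (Φ (P*a*Q + Q*b*P) - Φ (P*a*Q) - Φ (Q*b*P)) = 0 := by
      intro x
      have hz : dprod (Q*x*P) (P*a*Q) = 0 := by
        simp [dprod, star_mul, sP, sQ, mul_assoc, aPP, aPQ, aQP, aQQ, pPP, pPQ, pQP, pQQ]
      rw [Tlem2 Φ hΦd, dprod_add_right, hz, zero_add, hΦ0]
      abel
    have h0 := hPQsplit _ (extPQ _ f1) (extQP _ f2)
    rw [sub_sub, sub_eq_zero] at h0
    exact h0
  have C1121 : ∀ a b : 𝒜, Φ (P*a*P + Q*b*P) = Φ (P*a*P) + Φ (Q*b*P) := by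
    intro a b
    have f1 : ∀ x : 𝒜,
        dprod (P*x*Q) (Φ (P*a*P + Q*b*P) - Φ (P*a*P) - Φ (Q*b*P)) = 0 := by
      intro x
      have hz : dprod (P*x*Q) (Q*b*P) = 0 := by
        simp [dprod, star_mul, sP, sQ, mul_assoc, aPP, aPQ, aQP, aQQ, pPP, pPQ, pQP, pQQ]
      rw [Tlem2 Φ hΦd, dprod_add_right, hz, add_zero, hΦ0]
      abel
    have f2 : ∀ x : 𝒜,
        dprod (Q*x*Q) (Φ (P*a*P + Q*b*P) - Φ (P*a*P) - Φ (Q*b*P)) = 0 := by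
      intro x
      have hz : dprod (Q*x*Q) (P*a*P) = 0 := by
        simp [dprod, star_mul, sP, sQ, mul_assoc, aPP, aPQ, aQP, aQQ, pPP, pPQ, pQP, pQQ]
      rw [Tlem2 Φ hΦd, dprod_add_right, hz, zero_add, hΦ0]
      abel
    have h0 := hPQsplit _ (extPQ _ f1) (extQQ _ f2)
    rw [sub_sub, sub_eq_zero] at h0
    exact h0
  have C1222 : ∀ a b : 𝒜, Φ (P*a*Q + Q*b*Q) = Φ (P*a*Q) + Φ (Q*b*Q) := by
    intro a b
    have f1 : ∀ x : 𝒜,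
        dprod (P*x*P) (Φ (P*a*Q + Q*b*Q) - Φ (P*a*Q) - Φ (Q*b*Q)) = 0 := by
      intro x
      have hz : dprod (P*x*P) (Q*b*Q) = 0 := by
        simp [dprod, star_mul, sP, sQ, mul_assoc, aPP, aPQ, aQP, aQQ, pPP, pPQ, pQP, pQQ]
      rw [Tlem2 Φ hΦd, dprod_add_right, hz, add_zero, hΦ0]
      abel
    have f2 : ∀ x : 𝒜,
        dprod (Q*x*P) (Φ (P*a*Q + Q*b*Q) - Φ (P*a*Q) - Φ (Q*b*Q)) = 0 := by
      intro x
      have hz : dprod (Q*x*P) (P*a*Q) = 0 := by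
        simp [dprod, star_mul, sP, sQ, mul_assoc, aPP, aPQ, aQP, aQQ, pPP, pPQ, pQP, pQQ]
      rw [Tlem2 Φ hΦd, dprod_add_right, hz, zero_add, hΦ0]
      abel
    have h0 := hPQsplit _ (extPP _ f1) (extQP _ f2)
    rw [sub_sub, sub_eq_zero] at h0
    exact h0
  -- M1 : structure of the defect for (offdiag skew) + (22 skew)
  have M1 : ∀ b z : 𝒜,
      P * (Φ ((P*b*Q - Q*(star b)*P) + (Q*z*Q - Q*(star z)*Q))
            - Φ (P*b*Q - Q*(star b)*P) - Φ (Q*z*Q - Q*(star z)*Q)) = 0 ∧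
      (Φ ((P*b*Q - Q*(star b)*P) + (Q*z*Q - Q*(star z)*Q))
            - Φ (P*b*Q - Q*(star b)*P) - Φ (Q*z*Q - Q*(star z)*Q)) * P = 0 := by
    intro b z
    set m : 𝒜 := P*b*Q - Q*(star b)*P with hm
    set s : 𝒜 := Q*z*Q - Q*(star z)*Q with hsdef
    set T : 𝒜 := Φ (m + s) - Φ m - Φ s with hT
    have f1 : ∀ x : 𝒜, dprod (P*x*P) T = 0 := by
      intro x
      have hz : dprod (P*x*P) s = 0 := by
        simp [hsdef, dprod, star_mul, star_add, star_sub, star_neg, star_star, sP, sQ, mul_assoc, aPP, aPQ, aQP, aQQ, pPP, pPQ, pQP, pQQ, mul_add, add_mul, mul_sub, sub_mul, mul_neg, neg_mul, mul_one, one_mul, mul_zero, zero_mul]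
      rw [hT, Tlem2 Φ hΦd, dprod_add_right, hz, add_zero, hΦ0]
      abel
    have hPT : P*T = 0 := extPP _ f1
    have hmsk : star m = -m := by
      simp only [hm, star_sub, star_mul, star_star, sP, sQ, mul_assoc]
      abel
    have hssk : star s = -s := by
      simp only [hsdef, star_sub, star_mul, star_star, sQ, mul_assoc]
      abel
    have hmssum : star (m + s) = -(m+s) := by rw [star_add, hmsk, hssk]; abel
    have hTsk : star T = -T := by
      rw [hT, star_sub, star_sub, hskew1 _ hmssum, hskew1 _ hmsk, hskew1 _ hssk]
      abel
    have hTP : T*P = 0 := by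
      have hc := congrArg star hPT
      rw [star_mul, sP, hTsk, neg_mul, star_zero, neg_eq_zero] at hc
      exact hc
    exact ⟨hPT, hTP⟩
  -- M2 : additivity for (11 skew) + (offdiag skew)
  have M2 : ∀ z b : 𝒜,
      Φ ((P*z*P - P*(star z)*P) + (P*b*Q - Q*(star b)*P))
        = Φ (P*z*P - P*(star z)*P) + Φ (P*b*Q - Q*(star b)*P) := by
    intro z b
    set k : 𝒜 := P*z*P - P*(star z)*P with hk
    set m : 𝒜 := P*b*Q - Q*(star b)*P with hm
    set T : 𝒜 := Φ (k + m) - Φ k - Φ m with hT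
    have f22 : ∀ x : 𝒜, dprod (Q*x*Q) T = 0 := by
      intro x
      have hz : dprod (Q*x*Q) k = 0 := by
        simp [hk, dprod, star_mul, star_add, star_sub, star_neg, star_star, sP, sQ, mul_assoc, aPP, aPQ, aQP, aQQ, pPP, pPQ, pQP, pQQ, mul_add, add_mul, mul_sub, sub_mul, mul_neg, neg_mul, mul_one, one_mul, mul_zero, zero_mul]
      rw [hT, Tlem2 Φ hΦd, dprod_add_right, hz, zero_add, hΦ0]
      abel
    have hQT : Q*T = 0 := extQQ _ f22
    have hksk : star k = -k := by
      simp only [hk, star_sub, star_mul, star_star, sP, mul_assoc]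
      abel
    have hmsk : star m = -m := by
      simp only [hm, star_sub, star_mul, star_star, sP, sQ, mul_assoc]
      abel
    have hkm : star (k+m) = -(k+m) := by rw [star_add, hksk, hmsk]; abel
    have hTsk : star T = -T := by
      rw [hT, star_sub, star_sub, hskew1 _ hkm, hskew1 _ hksk, hskew1 _ hmsk]
      abel
    have hTQ : T*Q = 0 := by
      have hc := congrArg star hQT
      rw [star_mul, sQ, hTsk, neg_mul, star_zero, neg_eq_zero] at hc
      exact hc
    have hTP2 : P*T = T := by
      calc P*T = P*T + Q*T := by rw [hQT, add_zero]
        _ = (P+Q)*T := by rw [add_mul]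
        _ = T := by rw [pPQ1, one_mul]
    have hTP2' : T*P = T := by
      calc T*P = T*P + T*Q := by rw [hTQ, add_zero]
        _ = T*(P+Q) := by rw [mul_add]
        _ = T := by rw [pPQ1, mul_one]
    have f3 : ∀ y : 𝒜, Q * y * T = 0 := by
      intro y
      have e1 : dprod (P*(star y)*Q) k
          = P*(k*(star y))*Q - Q*(star (k*(star y)))*P := by
        simp only [hk, dprod, star_mul, star_add, star_sub, star_neg, star_star, sP, sQ, mul_assoc, aPP, aPQ, aQP, aQQ, pPP, pPQ, pQP, pQQ, mul_add, add_mul, mul_sub, sub_mul, mul_neg, neg_mul, mul_one, one_mul, mul_zero, zero_mul, sub_zero, zero_sub, add_zero, zero_add, neg_neg, neg_zero]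
        abel
      have e2 : dprod (P*(star y)*Q) m
          = Q*((star (star y))*(P*b))*Q - Q*(star ((star (star y))*(P*b)))*Q := by
        simp [hm, dprod, star_mul, star_add, star_sub, star_neg, star_star, sP, sQ, mul_assoc, aPP, aPQ, aQP, aQQ, pPP, pPQ, pQP, pQQ, mul_add, add_mul, mul_sub, sub_mul, mul_neg, neg_mul, mul_one, one_mul, mul_zero, zero_mul]
      obtain ⟨hR1, hR2⟩ := M1 (k*(star y)) ((star (star y))*(P*b))
      have e3 := Tlem2 Φ hΦd (P*(star y)*Q) k m
      rw [← hT, dprod_add_right, e1, e2] at e3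
      have e6 : Q * (dprod (P*(star y)*Q) T) * P = 0 := by
        rw [e3, mul_assoc, hR2, mul_zero]
      -- now compute the left side of e6
      simp only [dprod, hTsk] at e6
      simp only [star_mul, star_star, sP, sQ, mul_sub, sub_mul, mul_neg, neg_mul,
        mul_assoc, aPQ, aQP, aPP, aQQ, pQP, pPQ, pPP, pQQ, mul_zero, zero_mul,
        sub_zero, zero_sub, neg_zero, neg_neg, mul_one, one_mul] at e6
      -- e6 : Q * (y * (P * (T * P))) = 0
      rw [hTP2', hTP2] at e6
      simpa [mul_assoc] using e6
    have hT0 : T = 0 := prQ _ f3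
    rw [hT, sub_sub, sub_eq_zero] at hT0
    exact hT0
  -- M3 : additivity for (offdiag skew) + (22 skew)
  have M3 : ∀ b z : 𝒜,
      Φ ((P*b*Q - Q*(star b)*P) + (Q*z*Q - Q*(star z)*Q))
        = Φ (P*b*Q - Q*(star b)*P) + Φ (Q*z*Q - Q*(star z)*Q) := by
    intro b z
    set m : 𝒜 := P*b*Q - Q*(star b)*P with hm
    set s : 𝒜 := Q*z*Q - Q*(star z)*Q with hsdef
    set T : 𝒜 := Φ (m + s) - Φ m - Φ s with hT
    obtain ⟨hR1, hR2⟩ := M1 b z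
    rw [← hm, ← hsdef, ← hT] at hR1 hR2
    have f : ∀ x : 𝒜, dprod (Q*x*P) T = 0 := by
      intro x
      have e1 : dprod (Q*x*P) m
          = P*(b*(Q*x))*P - P*(star (b*(Q*x)))*P := by
        simp only [hm, dprod, star_mul, star_add, star_sub, star_neg, star_star, sP, sQ, mul_assoc, aPP, aPQ, aQP, aQQ, pPP, pPQ, pQP, pQQ, mul_add, add_mul, mul_sub, sub_mul, mul_neg, neg_mul, mul_one, one_mul, mul_zero, zero_mul, sub_zero, zero_sub, add_zero, zero_add, neg_neg, neg_zero]
        abel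
      have e2 : dprod (Q*x*P) s
          = P*((star x)*s)*Q - Q*(star ((star x)*s))*P := by
        simp only [hsdef, dprod, star_mul, star_add, star_sub, star_neg, star_star, sP, sQ, mul_assoc, aPP, aPQ, aQP, aQQ, pPP, pPQ, pQP, pQQ, mul_add, add_mul, mul_sub, sub_mul, mul_neg, neg_mul, mul_one, one_mul, mul_zero, zero_mul, sub_zero, zero_sub, add_zero, zero_add, neg_neg, neg_zero]
      rw [hT, Tlem2 Φ hΦd, dprod_add_right, e1, e2, M2 (b*(Q*x)) ((star x)*s)]
      abel
    have hmsk : star m = -m := by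
      simp only [hm, star_sub, star_mul, star_star, sP, sQ, mul_assoc]
      abel
    have hssk : star s = -s := by
      simp only [hsdef, star_sub, star_mul, star_star, sQ, mul_assoc]
      abel
    have hmssum : star (m + s) = -(m+s) := by rw [star_add, hmsk, hssk]; abel
    have hTsk : star T = -T := by
      rw [hT, star_sub, star_sub, hskew1 _ hmssum, hskew1 _ hmsk, hskew1 _ hssk]
      abel
    have hTQ : T = T*Q := by
      calc T = T*(P+Q) := by rw [pPQ1, mul_one]
        _ = T*P + T*Q := by rw [mul_add]
        _ = T*Q := by rw [hR2, zero_add]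
    have f2 : ∀ x : 𝒜, (T*Q) * x * P = 0 := by
      intro x
      have e6 : (dprod (Q*x*P) T) * P = 0 := by rw [f x, zero_mul]
      simp only [dprod, hTsk] at e6
      simp only [star_mul, star_star, sP, sQ, mul_sub, sub_mul, mul_neg, neg_mul,
        mul_assoc, aPQ, aQP, aPP, aQQ, pQP, pPQ, pPP, pQQ, mul_zero, zero_mul,
        sub_zero, zero_sub, add_zero, zero_add, neg_neg, neg_zero, mul_one, one_mul,
        hR2] at e6
      simpa [mul_assoc] using e6
    have hTQ0 : T*Q = 0 := prRP _ f2
    have hT0 : T = 0 := by rw [hTQ, hTQ0]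
    rw [hT, sub_sub, sub_eq_zero] at hT0
    exact hT0
  -- K1 : three-part additivity (11 skew) + (offdiag skew) + (22 skew)
  have K1 : ∀ u b v : 𝒜,
      Φ ((P*u*P - P*(star u)*P) + (P*b*Q - Q*(star b)*P) + (Q*v*Q - Q*(star v)*Q))
        = Φ (P*u*P - P*(star u)*P) + Φ (P*b*Q - Q*(star b)*P)
            + Φ (Q*v*Q - Q*(star v)*Q) := by
    intro u b v
    set k : 𝒜 := P*u*P - P*(star u)*P with hk
    set m : 𝒜 := P*b*Q - Q*(star b)*P with hm
    set s : 𝒜 := Q*v*Q - Q*(star v)*Q with hsdef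
    set T : 𝒜 := Φ (k + m + s) - Φ k - Φ m - Φ s with hT
    have f1 : ∀ x : 𝒜, dprod (P*x*Q) T = 0 := by
      intro x
      have e1 : dprod (P*x*Q) k = P*(k*x)*Q - Q*(star (k*x))*P := by
        simp only [hk, dprod, star_mul, star_add, star_sub, star_neg, star_star, sP, sQ, mul_assoc, aPP, aPQ, aQP, aQQ, pPP, pPQ, pQP, pQQ, mul_add, add_mul, mul_sub, sub_mul, mul_neg, neg_mul, mul_one, one_mul, mul_zero, zero_mul, sub_zero, zero_sub, add_zero, zero_add, neg_neg, neg_zero]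
        abel
      have e2 : dprod (P*x*Q) m
          = Q*((star x)*(P*b))*Q - Q*(star ((star x)*(P*b)))*Q := by
        simp only [hm, dprod, star_mul, star_add, star_sub, star_neg, star_star, sP, sQ, mul_assoc, aPP, aPQ, aQP, aQQ, pPP, pPQ, pQP, pQQ, mul_add, add_mul, mul_sub, sub_mul, mul_neg, neg_mul, mul_one, one_mul, mul_zero, zero_mul, sub_zero, zero_sub, add_zero, zero_add, neg_neg, neg_zero]
      have e3 : dprod (P*x*Q) s = 0 := by
        simp only [hsdef, dprod, star_mul, star_add, star_sub, star_neg, star_star, sP, sQ, mul_assoc, aPP, aPQ, aQP, aQQ, pPP, pPQ, pQP, pQQ, mul_add, add_mul, mul_sub, sub_mul, mul_neg, neg_mul, mul_one, one_mul, mul_zero, zero_mul, sub_zero, zero_sub, add_zero, zero_add, neg_neg, neg_zero]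
      rw [hT, Tlem3 Φ hΦd, dprod_add_right, dprod_add_right, e1, e2, e3, add_zero,
        hΦ0, M3 (k*x) ((star x)*(P*b))]
      abel
    have f2 : ∀ x : 𝒜, dprod (Q*x*P) T = 0 := by
      intro x
      have e1 : dprod (Q*x*P) k = 0 := by
        simp only [hk, dprod, star_mul, star_add, star_sub, star_neg, star_star, sP, sQ, mul_assoc, aPP, aPQ, aQP, aQQ, pPP, pPQ, pQP, pQQ, mul_add, add_mul, mul_sub, sub_mul, mul_neg, neg_mul, mul_one, one_mul, mul_zero, zero_mul, sub_zero, zero_sub, add_zero, zero_add, neg_neg, neg_zero]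
      have e2 : dprod (Q*x*P) m
          = P*(b*(Q*x))*P - P*(star (b*(Q*x)))*P := by
        simp only [hm, dprod, star_mul, star_add, star_sub, star_neg, star_star, sP, sQ, mul_assoc, aPP, aPQ, aQP, aQQ, pPP, pPQ, pQP, pQQ, mul_add, add_mul, mul_sub, sub_mul, mul_neg, neg_mul, mul_one, one_mul, mul_zero, zero_mul, sub_zero, zero_sub, add_zero, zero_add, neg_neg, neg_zero]
        abel
      have e3 : dprod (Q*x*P) s
          = P*((star x)*s)*Q - Q*(star ((star x)*s))*P := by
        simp only [hsdef, dprod, star_mul, star_add, star_sub, star_neg, star_star, sP, sQ, mul_assoc, aPP, aPQ, aQP, aQQ, pPP, pPQ, pQP, pQQ, mul_add, add_mul, mul_sub, sub_mul, mul_neg, neg_mul, mul_one, one_mul, mul_zero, zero_mul, sub_zero, zero_sub, add_zero, zero_add, neg_neg, neg_zero]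
      rw [hT, Tlem3 Φ hΦd, dprod_add_right, dprod_add_right, e1, e2, e3, zero_add,
        hΦ0, M2 (b*(Q*x)) ((star x)*s)]
      abel
    have hT0 : T = 0 := hPQsplit _ (extPQ _ f1) (extQP _ f2)
    rw [hT, sub_sub, sub_sub, sub_eq_zero] at hT0
    rw [hT0]
    abel
  -- K3 : additivity of off-diagonal skew elements
  have K3 : ∀ a b : 𝒜,
      Φ ((P*a*Q - Q*(star a)*P) + (P*b*Q - Q*(star b)*P))
        = Φ (P*a*Q - Q*(star a)*P) + Φ (P*b*Q - Q*(star b)*P) := by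
    intro a b
    have hP1 : P*(1:𝒜)*P = P := by rw [mul_one, pPP]
    have hQ1 : Q*(1:𝒜)*Q = Q := by rw [mul_one, pQQ]
    have hXmem : Φ (P + Q*(star b)*P) = Φ P + Φ (Q*(star b)*P) := by
      have h := C1121 1 (star b)
      rw [hP1] at h
      exact h
    have hYmem : Φ (P*a*Q + Q) = Φ (P*a*Q) + Φ Q := by
      have h := C1222 a 1
      rw [hQ1] at h
      exact h
    have main : Φ (dprod (P + Q*(star b)*P) (P*a*Q + Q))
        = Φ (dprod P (P*a*Q)) + Φ (dprod P Q) + Φ (dprod (Q*(star b)*P) (P*a*Q))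
          + Φ (dprod (Q*(star b)*P) Q) := by
      rw [hΦd, hΦd, hΦd, hΦd, hΦd, hXmem, hYmem]
      simp only [dprod_add_left, dprod_add_right]
      abel
    have c0 : dprod (P + Q*(star b)*P) (P*a*Q + Q)
        = (P*a*Q - Q*(star a)*P) + (P*b*Q - Q*(star b)*P) := by
      simp only [dprod, star_mul, star_add, star_sub, star_neg, star_star, sP, sQ, mul_assoc, aPP, aPQ, aQP, aQQ, pPP, pPQ, pQP, pQQ, mul_add, add_mul, mul_sub, sub_mul, mul_neg, neg_mul, mul_one, one_mul, mul_zero, zero_mul, sub_zero, zero_sub, add_zero, zero_add, neg_neg, neg_zero]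
      abel
    have c1 : dprod P (P*a*Q) = P*a*Q - Q*(star a)*P := by
      simp only [dprod, star_mul, star_add, star_sub, star_neg, star_star, sP, sQ, mul_assoc, aPP, aPQ, aQP, aQQ, pPP, pPQ, pQP, pQQ, mul_add, add_mul, mul_sub, sub_mul, mul_neg, neg_mul, mul_one, one_mul, mul_zero, zero_mul, sub_zero, zero_sub, add_zero, zero_add, neg_neg, neg_zero]
    have c2 : dprod P Q = 0 := by
      simp only [dprod, star_mul, star_add, star_sub, star_neg, star_star, sP, sQ, mul_assoc, aPP, aPQ, aQP, aQQ, pPP, pPQ, pQP, pQQ, mul_add, add_mul, mul_sub, sub_mul, mul_neg, neg_mul, mul_one, one_mul, mul_zero, zero_mul, sub_zero, zero_sub, add_zero, zero_add, neg_neg, neg_zero]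
    have c3 : dprod (Q*(star b)*P) (P*a*Q) = 0 := by
      simp only [dprod, star_mul, star_add, star_sub, star_neg, star_star, sP, sQ, mul_assoc, aPP, aPQ, aQP, aQQ, pPP, pPQ, pQP, pQQ, mul_add, add_mul, mul_sub, sub_mul, mul_neg, neg_mul, mul_one, one_mul, mul_zero, zero_mul, sub_zero, zero_sub, add_zero, zero_add, neg_neg, neg_zero]
    have c4 : dprod (Q*(star b)*P) Q = P*b*Q - Q*(star b)*P := by
      simp only [dprod, star_mul, star_add, star_sub, star_neg, star_star, sP, sQ, mul_assoc, aPP, aPQ, aQP, aQQ, pPP, pPQ, pQP, pQQ, mul_add, add_mul, mul_sub, sub_mul, mul_neg, neg_mul, mul_one, one_mul, mul_zero, zero_mul, sub_zero, zero_sub, add_zero, zero_add, neg_neg, neg_zero]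
    rw [c0, c1, c2, c3, c4, hΦ0] at main
    simpa using main
  -- K2a : additivity of skew elements of 𝒜₁₁
  have K2a : ∀ u w : 𝒜,
      Φ ((P*u*P - P*(star u)*P) + (P*w*P - P*(star w)*P))
        = Φ (P*u*P - P*(star u)*P) + Φ (P*w*P - P*(star w)*P) := by
    intro u w
    set k : 𝒜 := P*u*P - P*(star u)*P with hk
    set k' : 𝒜 := P*w*P - P*(star w)*P with hk'
    set T : 𝒜 := Φ (k + k') - Φ k - Φ k' with hT
    have f22 : ∀ x : 𝒜, dprod (Q*x*Q) T = 0 := by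
      intro x
      have hz1 : dprod (Q*x*Q) k = 0 := by simp only [hk, dprod, star_mul, star_add, star_sub, star_neg, star_star, sP, sQ, mul_assoc, aPP, aPQ, aQP, aQQ, pPP, pPQ, pQP, pQQ, mul_add, add_mul, mul_sub, sub_mul, mul_neg, neg_mul, mul_one, one_mul, mul_zero, zero_mul, sub_zero, zero_sub, add_zero, zero_add, neg_neg, neg_zero]
      have hz2 : dprod (Q*x*Q) k' = 0 := by simp only [hk', dprod, star_mul, star_add, star_sub, star_neg, star_star, sP, sQ, mul_assoc, aPP, aPQ, aQP, aQQ, pPP, pPQ, pQP, pQQ, mul_add, add_mul, mul_sub, sub_mul, mul_neg, neg_mul, mul_one, one_mul, mul_zero, zero_mul, sub_zero, zero_sub, add_zero, zero_add, neg_neg, neg_zero]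
      rw [hT, Tlem2 Φ hΦd, dprod_add_right, hz1, hz2, add_zero, hΦ0]
      abel
    have hQT : Q*T = 0 := extQQ _ f22
    have hksk : star k = -k := by
      simp only [hk, star_sub, star_mul, star_star, sP, mul_assoc]; abel
    have hk'sk : star k' = -k' := by
      simp only [hk', star_sub, star_mul, star_star, sP, mul_assoc]; abel
    have hsum : star (k+k') = -(k+k') := by rw [star_add, hksk, hk'sk]; abel
    have hTsk : star T = -T := by
      rw [hT, star_sub, star_sub, hskew1 _ hsum, hskew1 _ hksk, hskew1 _ hk'sk]; abel
    have hTQ : T*Q = 0 := by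
      have hc := congrArg star hQT
      rw [star_mul, sQ, hTsk, neg_mul, star_zero, neg_eq_zero] at hc
      exact hc
    have hTP2 : P*T = T := by
      calc P*T = P*T + Q*T := by rw [hQT, add_zero]
        _ = (P+Q)*T := by rw [add_mul]
        _ = T := by rw [pPQ1, one_mul]
    have hTP2' : T*P = T := by
      calc T*P = T*P + T*Q := by rw [hTQ, add_zero]
        _ = T*(P+Q) := by rw [mul_add]
        _ = T := by rw [pPQ1, mul_one]
    have f3 : ∀ y : 𝒜, Q * y * T = 0 := by
      intro y
      have e1 : dprod (P*(star y)*Q) k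
          = P*(k*(star y))*Q - Q*(star (k*(star y)))*P := by
        simp only [hk, dprod, star_mul, star_add, star_sub, star_neg, star_star, sP, sQ, mul_assoc, aPP, aPQ, aQP, aQQ, pPP, pPQ, pQP, pQQ, mul_add, add_mul, mul_sub, sub_mul, mul_neg, neg_mul, mul_one, one_mul, mul_zero, zero_mul, sub_zero, zero_sub, add_zero, zero_add, neg_neg, neg_zero]
        abel
      have e2 : dprod (P*(star y)*Q) k'
          = P*(k'*(star y))*Q - Q*(star (k'*(star y)))*P := by
        simp only [hk', dprod, star_mul, star_add, star_sub, star_neg, star_star, sP, sQ, mul_assoc, aPP, aPQ, aQP, aQQ, pPP, pPQ, pQP, pQQ, mul_add, add_mul, mul_sub, sub_mul, mul_neg, neg_mul, mul_one, one_mul, mul_zero, zero_mul, sub_zero, zero_sub, add_zero, zero_add, neg_neg, neg_zero]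
        abel
      have e4 : dprod (P*(star y)*Q) T = 0 := by
        rw [hT, Tlem2 Φ hΦd, dprod_add_right, e1, e2, K3 (k*(star y)) (k'*(star y))]
        abel
      have e6 : Q * (dprod (P*(star y)*Q) T) * P = 0 := by
        rw [e4, mul_zero, zero_mul]
      simp only [dprod, hTsk] at e6
      simp only [star_mul, star_star, sP, sQ, mul_sub, sub_mul, mul_neg, neg_mul,
        mul_assoc, aPQ, aQP, aPP, aQQ, pQP, pPQ, pPP, pQQ, mul_zero, zero_mul,
        sub_zero, zero_sub, add_zero, zero_add, neg_neg, neg_zero, mul_one, one_mul] at e6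
      rw [hTP2', hTP2] at e6
      simpa [mul_assoc] using e6
    have hT0 : T = 0 := prQ _ f3
    rw [hT, sub_sub, sub_eq_zero] at hT0
    exact hT0
  -- K2b : additivity of skew elements of 𝒜₂₂
  have K2b : ∀ u w : 𝒜,
      Φ ((Q*u*Q - Q*(star u)*Q) + (Q*w*Q - Q*(star w)*Q))
        = Φ (Q*u*Q - Q*(star u)*Q) + Φ (Q*w*Q - Q*(star w)*Q) := by
    intro u w
    set k : 𝒜 := Q*u*Q - Q*(star u)*Q with hk
    set k' : 𝒜 := Q*w*Q - Q*(star w)*Q with hk'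
    set T : 𝒜 := Φ (k + k') - Φ k - Φ k' with hT
    have f11 : ∀ x : 𝒜, dprod (P*x*P) T = 0 := by
      intro x
      have hz1 : dprod (P*x*P) k = 0 := by simp only [hk, dprod, star_mul, star_add, star_sub, star_neg, star_star, sP, sQ, mul_assoc, aPP, aPQ, aQP, aQQ, pPP, pPQ, pQP, pQQ, mul_add, add_mul, mul_sub, sub_mul, mul_neg, neg_mul, mul_one, one_mul, mul_zero, zero_mul, sub_zero, zero_sub, add_zero, zero_add, neg_neg, neg_zero]
      have hz2 : dprod (P*x*P) k' = 0 := by simp only [hk', dprod, star_mul, star_add, star_sub, star_neg, star_star, sP, sQ, mul_assoc, aPP, aPQ, aQP, aQQ, pPP, pPQ, pQP, pQQ, mul_add, add_mul, mul_sub, sub_mul, mul_neg, neg_mul, mul_one, one_mul, mul_zero, zero_mul, sub_zero, zero_sub, add_zero, zero_add, neg_neg, neg_zero]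
      rw [hT, Tlem2 Φ hΦd, dprod_add_right, hz1, hz2, add_zero, hΦ0]
      abel
    have hPT : P*T = 0 := extPP _ f11
    have hksk : star k = -k := by
      simp only [hk, star_sub, star_mul, star_star, sQ, mul_assoc]; abel
    have hk'sk : star k' = -k' := by
      simp only [hk', star_sub, star_mul, star_star, sQ, mul_assoc]; abel
    have hsum : star (k+k') = -(k+k') := by rw [star_add, hksk, hk'sk]; abel
    have hTsk : star T = -T := by
      rw [hT, star_sub, star_sub, hskew1 _ hsum, hskew1 _ hksk, hskew1 _ hk'sk]; abel
    have hTP : T*P = 0 := by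
      have hc := congrArg star hPT
      rw [star_mul, sP, hTsk, neg_mul, star_zero, neg_eq_zero] at hc
      exact hc
    have hTQ2 : Q*T = T := by
      calc Q*T = P*T + Q*T := by rw [hPT, zero_add]
        _ = (P+Q)*T := by rw [add_mul]
        _ = T := by rw [pPQ1, one_mul]
    have hTQ2' : T*Q = T := by
      calc T*Q = T*P + T*Q := by rw [hTP, zero_add]
        _ = T*(P+Q) := by rw [mul_add]
        _ = T := by rw [pPQ1, mul_one]
    have f3 : ∀ y : 𝒜, P * y * T = 0 := by
      intro y
      have e1 : dprod (Q*(star y)*P) k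
          = P*((star (star y))*k)*Q - Q*(star ((star (star y))*k))*P := by
        simp only [hk, dprod, star_mul, star_add, star_sub, star_neg, star_star, sP, sQ, mul_assoc, aPP, aPQ, aQP, aQQ, pPP, pPQ, pQP, pQQ, mul_add, add_mul, mul_sub, sub_mul, mul_neg, neg_mul, mul_one, one_mul, mul_zero, zero_mul, sub_zero, zero_sub, add_zero, zero_add, neg_neg, neg_zero]
      have e2 : dprod (Q*(star y)*P) k'
          = P*((star (star y))*k')*Q - Q*(star ((star (star y))*k'))*P := by
        simp only [hk', dprod, star_mul, star_add, star_sub, star_neg, star_star, sP, sQ, mul_assoc, aPP, aPQ, aQP, aQQ, pPP, pPQ, pQP, pQQ, mul_add, add_mul, mul_sub, sub_mul, mul_neg, neg_mul, mul_one, one_mul, mul_zero, zero_mul, sub_zero, zero_sub, add_zero, zero_add, neg_neg, neg_zero]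
      have e4 : dprod (Q*(star y)*P) T = 0 := by
        rw [hT, Tlem2 Φ hΦd, dprod_add_right, e1, e2,
          K3 ((star (star y))*k) ((star (star y))*k')]
        abel
      have e6 : P * (dprod (Q*(star y)*P) T) * Q = 0 := by
        rw [e4, mul_zero, zero_mul]
      simp only [dprod, hTsk] at e6
      simp only [star_mul, star_star, sP, sQ, mul_sub, sub_mul, mul_neg, neg_mul,
        mul_assoc, aPQ, aQP, aPP, aQQ, pQP, pPQ, pPP, pQQ, mul_zero, zero_mul,
        sub_zero, zero_sub, add_zero, zero_add, neg_neg, neg_zero, mul_one, one_mul] at e6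
      rw [hTQ2', hTQ2] at e6
      simpa [mul_assoc] using e6
    have hT0 : T = 0 := prP _ f3
    rw [hT, sub_sub, sub_eq_zero] at hT0
    exact hT0
  -- Peirce decomposition of skew elements
  have decomp : ∀ K : 𝒜, star K = -K →
      (P*(((1:ℂ)/2)•K)*P - P*(star (((1:ℂ)/2)•K))*P)
        + (P*K*Q - Q*(star K)*P)
        + (Q*(((1:ℂ)/2)•K)*Q - Q*(star (((1:ℂ)/2)•K))*Q) = K := by
    intro K hK
    have hP4 : P*K*P + P*K*Q + Q*K*P + Q*K*Q = K := by
      have h' : (P+Q)*K*(P+Q) = K := by rw [pPQ1, one_mul, mul_one]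
      calc P*K*P + P*K*Q + Q*K*P + Q*K*Q = (P+Q)*K*(P+Q) := by
            rw [add_mul, add_mul, mul_add, mul_add]; abel
        _ = K := h'
    rw [star_smul, Complex.star_def, hhalfstar, hK, smul_neg]
    simp only [mul_neg, neg_mul, sub_neg_eq_add, mul_smul_comm, smul_mul_assoc]
    conv_rhs => rw [← hP4]
    module
  -- skew additivity
  have KS : ∀ K K' : 𝒜, star K = -K → star K' = -K' → Φ (K + K') = Φ K + Φ K' := by
    intro K K' hK hK'
    have hKK' : star (K + K') = -(K+K') := by rw [star_add, hK, hK']; abel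
    have dec : ∀ W : 𝒜, star W = -W →
        Φ W = Φ (P*(((1:ℂ)/2)•W)*P - P*(star (((1:ℂ)/2)•W))*P)
          + Φ (P*W*Q - Q*(star W)*P)
          + Φ (Q*(((1:ℂ)/2)•W)*Q - Q*(star (((1:ℂ)/2)•W))*Q) := by
      intro W hW
      conv_lhs => rw [← decomp W hW]
      exact K1 _ _ _
    rw [dec _ hKK', dec _ hK, dec _ hK']
    have c1 : P*(((1:ℂ)/2)•(K+K'))*P - P*(star (((1:ℂ)/2)•(K+K')))*P
        = (P*(((1:ℂ)/2)•K)*P - P*(star (((1:ℂ)/2)•K))*P)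
          + (P*(((1:ℂ)/2)•K')*P - P*(star (((1:ℂ)/2)•K'))*P) := by
      simp only [smul_add, star_add, mul_add, add_mul]
      abel
    have c2 : P*(K+K')*Q - Q*(star (K+K'))*P
        = (P*K*Q - Q*(star K)*P) + (P*K'*Q - Q*(star K')*P) := by
      simp only [smul_add, star_add, mul_add, add_mul]
      abel
    have c3 : Q*(((1:ℂ)/2)•(K+K'))*Q - Q*(star (((1:ℂ)/2)•(K+K')))*Q
        = (Q*(((1:ℂ)/2)•K)*Q - Q*(star (((1:ℂ)/2)•K))*Q)
          + (Q*(((1:ℂ)/2)•K')*Q - Q*(star (((1:ℂ)/2)•K'))*Q) := by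
      simp only [smul_add, star_add, mul_add, add_mul]
      abel
    rw [c1, c2, c3, K2a (((1:ℂ)/2)•K) (((1:ℂ)/2)•K'), K3 K K',
      K2b (((1:ℂ)/2)•K) (((1:ℂ)/2)•K')]
    abel
  -- self-adjoint additivity
  have SA : ∀ S S' : 𝒜, star S = S → star S' = S' → Φ (S + S') = Φ S + Φ S' := by
    intro S S' hS hS'
    have hk1 : star (Complex.I • S) = -(Complex.I • S) := by
      rw [star_smul, Complex.star_def, Complex.conj_I, hS, neg_smul]
    have hk2 : star (Complex.I • S') = -(Complex.I • S') := by
      rw [star_smul, Complex.star_def, Complex.conj_I, hS', neg_smul]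
    have h := KS _ _ hk1 hk2
    rw [← smul_add, hJΦ, hJΦ, hJΦ] at h
    apply hcancelI
    rw [h, smul_add]
  -- full additivity
  have ADD : ∀ A B : 𝒜, Φ (A + B) = Φ A + Φ B := by
    intro A B
    have e1 : ((1:ℂ)/2)•((A+B) + star (A+B))
        = ((1:ℂ)/2)•(A + star A) + ((1:ℂ)/2)•(B + star B) := by
      rw [star_add]; module
    have e2 : ((1:ℂ)/2)•((A+B) - star (A+B))
        = ((1:ℂ)/2)•(A - star A) + ((1:ℂ)/2)•(B - star B) := by
      rw [star_add]; module
    calc Φ (A+B) = Φ (((1:ℂ)/2)•((A+B) + star (A+B)))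
          + Φ (((1:ℂ)/2)•((A+B) - star (A+B))) := hsplit _
      _ = Φ (((1:ℂ)/2)•(A + star A) + ((1:ℂ)/2)•(B + star B))
          + Φ (((1:ℂ)/2)•(A - star A) + ((1:ℂ)/2)•(B - star B)) := by rw [e1, e2]
      _ = (Φ (((1:ℂ)/2)•(A + star A)) + Φ (((1:ℂ)/2)•(B + star B)))
          + (Φ (((1:ℂ)/2)•(A - star A)) + Φ (((1:ℂ)/2)•(B - star B))) := by
            rw [SA _ _ (hsaA A) (hsaA B), KS _ _ (hskA A) (hskA B)]
      _ = (Φ (((1:ℂ)/2)•(A + star A)) + Φ (((1:ℂ)/2)•(A - star A)))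
          + (Φ (((1:ℂ)/2)•(B + star B)) + Φ (((1:ℂ)/2)•(B - star B))) := by abel
      _ = Φ A + Φ B := by rw [← hsplit A, ← hsplit B]
  -- product rule
  have F1 : ∀ A B : 𝒜, Φ (A*B - star (A*B))
      = (Φ A * B + A * Φ B) - star (Φ A * B + A * Φ B) := by
    intro A B
    have h := hΦd (star A) B
    have c0 : dprod (star A) B = A*B - star (A*B) := by
      simp only [dprod, star_star, star_mul]
    have c1 : dprod (Φ (star A)) B = Φ A * B - star (Φ A * B) := by
      rw [hstarΦ A]
      simp only [dprod, star_star, star_mul]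
    have c2 : dprod (star A) (Φ B) = A * Φ B - star (A * Φ B) := by
      simp only [dprod, star_star, star_mul]
    rw [c0, c1, c2] at h
    rw [h, star_add]
    abel
  have F2 : ∀ A B : 𝒜, Φ (A*B + star (A*B))
      = (Φ A * B + A * Φ B) + star (Φ A * B + A * Φ B) := by
    intro A B
    have h := hΦd (star A) (Complex.I • B)
    have c0 : dprod (star A) (Complex.I • B) = Complex.I • (A*B + star (A*B)) := by
      simp only [dprod, star_star, star_mul, star_smul, Complex.star_def, Complex.conj_I,
        neg_smul, smul_mul_assoc, mul_smul_comm, smul_add, neg_mul, sub_neg_eq_add]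
    have c1 : dprod (Φ (star A)) (Complex.I • B)
        = Complex.I • (Φ A * B + star (Φ A * B)) := by
      rw [hstarΦ A]
      simp only [dprod, star_star, star_mul, star_smul, Complex.star_def, Complex.conj_I,
        neg_smul, smul_mul_assoc, mul_smul_comm, smul_add, neg_mul, sub_neg_eq_add]
    have c2 : dprod (star A) (Φ (Complex.I • B))
        = Complex.I • (A * Φ B + star (A * Φ B)) := by
      rw [hJΦ B]
      simp only [dprod, star_star, star_mul, star_smul, Complex.star_def, Complex.conj_I,
        neg_smul, smul_mul_assoc, mul_smul_comm, smul_add, neg_mul, sub_neg_eq_add]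
    rw [c0, hJΦ, c1, c2, ← smul_add] at h
    have h' := hcancelI _ _ h
    rw [h', star_add]
    abel
  have MUL : ∀ A B : 𝒜, Φ (A*B) = Φ A * B + A * Φ B := by
    intro A B
    have h := ADD (A*B - star (A*B)) (A*B + star (A*B))
    rw [F1 A B, F2 A B] at h
    have e : (A*B - star (A*B)) + (A*B + star (A*B)) = A*B + A*B := by abel
    rw [e, ADD] at h
    have h3 : (Φ (A*B) - (Φ A * B + A * Φ B)) + (Φ (A*B) - (Φ A * B + A * Φ B)) = 0 := by
      calc (Φ (A*B) - (Φ A * B + A * Φ B)) + (Φ (A*B) - (Φ A * B + A * Φ B))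
          = (Φ (A*B) + Φ (A*B))
            - (((Φ A * B + A * Φ B) - star (Φ A * B + A * Φ B))
              + ((Φ A * B + A * Φ B) + star (Φ A * B + A * Φ B))) := by abel
        _ = 0 := by rw [← h, sub_self]
    have h4 := hcancel2 _ h3
    rw [sub_eq_zero] at h4
    exact h4
  exact ⟨ADD, MUL, hstarΦ⟩
end

section
/- Let 𝒜 be a unital ∗-algebra over ℂ and let Φ : 𝒜 → 𝒜 be a nonlinear ⋄-derivation such that Φ(I/2) and Φ(iI/2) are self-adjoint. Then Φ(iI/2) = Φ(I/2) = Φ(−iI/2) = 0. -/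
/-- If `Φ` is a nonlinear `⋄`-derivation on a unital ∗-algebra over `ℂ`
with `Φ(I/2)` and `Φ(iI/2)` self-adjoint, then `Φ(iI/2) = Φ(I/2) = Φ(−iI/2) = 0`. -/
theorem stmt1 {𝒜 : Type*} [Ring 𝒜] [Algebra ℂ 𝒜] [StarRing 𝒜] [StarModule ℂ 𝒜]
    (Φ : 𝒜 → 𝒜)
    (hΦ : ∀ A B : 𝒜, Φ (star A * B - star B * A) =
      (star (Φ A) * B - star B * Φ A) + (star A * Φ B - star (Φ B) * A))
    (h1 : star (Φ (((1 : ℂ)/2) • (1 : 𝒜))) = Φ (((1 : ℂ)/2) • (1 : 𝒜)))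
    (h2 : star (Φ ((Complex.I/2) • (1 : 𝒜))) = Φ ((Complex.I/2) • (1 : 𝒜))) :
    Φ ((Complex.I/2) • (1 : 𝒜)) = 0 ∧ Φ (((1 : ℂ)/2) • (1 : 𝒜)) = 0 ∧
      Φ ((-(Complex.I)/2) • (1 : 𝒜)) = 0 := by
  set P : 𝒜 := ((1 : ℂ)/2) • (1 : 𝒜) with hP
  set Q : 𝒜 := (Complex.I/2) • (1 : 𝒜) with hQ
  have sP : star P = P := by
    rw [hP, star_smul, star_one]
    norm_num
  have sQ : star Q = -Q := by
    rw [hQ, star_smul, star_one, ← neg_smul]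
    congr 1
    simp [Complex.ext_iff]
    norm_num
  -- P ⋄ Q = Q
  have key1 : star P * Q - star Q * P = Q := by
    rw [sP, sQ, hP, hQ, neg_mul, smul_mul_smul_comm, smul_mul_smul_comm, one_mul, sub_neg_eq_add,
      ← add_smul]
    congr 1
    ring
  -- Q ⋄ P = -Q
  have key2 : star Q * P - star P * Q = (-(Complex.I)/2) • (1 : 𝒜) := by
    rw [sP, sQ, hP, hQ, neg_mul, smul_mul_smul_comm, smul_mul_smul_comm, one_mul, ← neg_smul,
      ← sub_smul]
    congr 1
    ring
  -- Φ Q = I • Φ P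
  have e1 : Φ Q = Complex.I • Φ P := by
    have e := hΦ P Q
    rw [key1, h1, h2, sP, sQ, hP, hQ] at e
    rw [e]
    rw [neg_mul, sub_neg_eq_add, mul_smul_comm, smul_mul_assoc, mul_one, one_mul,
      mul_smul_comm, smul_mul_assoc, mul_one, one_mul, sub_self, add_zero, ← add_smul]
    congr 1
    ring
  -- Φ Q = 0
  have hQ0 : Φ Q = 0 := by
    have : star (Φ Q) = -Φ Q := by
      rw [e1, star_smul, h1, Complex.star_def, Complex.conj_I, neg_smul]
    rw [h2] at this
    have h2' : (2 : ℂ) • Φ Q = 0 := by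
      rw [two_smul]
      nth_rewrite 1 [this]
      simp
    rcases smul_eq_zero.mp h2' with h | h
    · exact absurd h two_ne_zero
    · exact h
  -- Φ P = 0
  have hP0 : Φ P = 0 := by
    rw [hQ0] at e1
    rcases smul_eq_zero.mp e1.symm with h | h
    · exact absurd h Complex.I_ne_zero
    · exact h
  refine ⟨hQ0, hP0, ?_⟩
  have e := hΦ Q P
  rw [key2, hQ0, hP0] at e
  simpa using e
end

section
/- Let 𝒜 be a unital ∗-algebra over ℂ and let Φ : 𝒜 → 𝒜 be a nonlinear ⋄-derivation such that Φ(I/2) and Φ(iI/2) are self-adjoint. Then Φ(−I/2) = 0. -/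
/-- If `Φ` is a nonlinear `⋄`-derivation on a unital ∗-algebra over `ℂ`
with `Φ(I/2)` and `Φ(iI/2)` self-adjoint, then `Φ(−I/2) = 0`. -/
theorem stmt2 {𝒜 : Type*} [Ring 𝒜] [Algebra ℂ 𝒜] [StarRing 𝒜] [StarModule ℂ 𝒜]
    (Φ : 𝒜 → 𝒜)
    (hΦ : ∀ A B : 𝒜, Φ (star A * B - star B * A) =
      (star (Φ A) * B - star B * Φ A) + (star A * Φ B - star (Φ B) * A))
    (h1 : star (Φ (((1 : ℂ)/2) • (1 : 𝒜))) = Φ (((1 : ℂ)/2) • (1 : 𝒜)))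
    (h2 : star (Φ ((Complex.I/2) • (1 : 𝒜))) = Φ ((Complex.I/2) • (1 : 𝒜))) :
    Φ ((-(1 : ℂ)/2) • (1 : 𝒜)) = 0 := by
  set P : 𝒜 := ((1:ℂ)/2) • (1:𝒜) with hPdef
  set Q : 𝒜 := (Complex.I/2) • (1:𝒜) with hQdef
  set M : 𝒜 := (-(1:ℂ)/2) • (1:𝒜) with hMdef
  have h0 : Φ 0 = 0 := by simpa using hΦ 0 0
  have sP : star P = P := by simp [hPdef, star_smul]
  have sQ : star Q = (-(Complex.I)/2) • (1:𝒜) := by simp [hQdef, star_smul]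
  have sM : star M = M := by simp [hMdef, star_smul]
  -- P ⋄ Q = Q
  have arg1 : star P * Q - star Q * P = Q := by
    rw [sP, sQ]
    simp [hPdef, hQdef, smul_mul_assoc, mul_smul_comm, smul_smul, ← sub_smul]
    ring_nf
  have e1 := hΦ P Q
  rw [arg1, h1, h2, sP, sQ] at e1
  have e1' : Φ Q = Complex.I • Φ P := by
    rw [e1, hPdef, hQdef]
    simp [smul_mul_assoc, mul_smul_comm, smul_smul, ← sub_smul, ← add_smul]
    module
  have hP0 : Φ P = 0 := by
    have hh := h2
    rw [e1', star_smul, h1] at hh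
    have hh2 : (-Complex.I) • Φ P = Complex.I • Φ P := by
      rw [← hh]; norm_num [Complex.star_def, Complex.conj_I]
    have h3 : (Complex.I + Complex.I) • Φ P = 0 := by
      rw [add_smul]
      nth_rewrite 1 [← hh2]
      rw [← add_smul]; norm_num
    have hne : (Complex.I + Complex.I) ≠ 0 := by
      intro h
      exact Complex.I_ne_zero (by linear_combination h/2)
    exact (smul_eq_zero.mp h3).resolve_left hne
  have hQ0 : Φ Q = 0 := by rw [e1', hP0, smul_zero]
  -- Q ⋄ P = -Q, so Φ(-Q) = 0
  have argQP : star Q * P - star P * Q = (-(Complex.I)/2) • (1:𝒜) := by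
    rw [sQ, sP]
    simp [hPdef, hQdef, smul_mul_assoc, mul_smul_comm, smul_smul, ← sub_smul]
    ring_nf
  have e2 := hΦ Q P
  rw [argQP, hQ0, hP0] at e2
  simp at e2
  -- e2 : Φ ((-I/2) • 1) = 0
  -- M ⋄ Q = -Q
  have argMQ : star M * Q - star Q * M = (-(Complex.I)/2) • (1:𝒜) := by
    rw [sM, sQ]
    simp [hMdef, hQdef, smul_mul_assoc, mul_smul_comm, smul_smul, ← sub_smul]
    ring_nf
  have e3 := hΦ M Q
  rw [argMQ, hQ0, e2, sQ, sM] at e3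
  -- e3 : 0 = star (Φ M) * Q - (-I/2)•1 * Φ M + (M * 0 - star 0 * M)
  have e3' : Complex.I • (star (Φ M) + Φ M) = 0 := by
    rw [hQdef] at e3
    simp [smul_mul_assoc, mul_smul_comm, smul_smul] at e3
    calc Complex.I • (star (Φ M) + Φ M)
        = (2:ℂ) • ((Complex.I/2) • star (Φ M) - (-Complex.I/2) • Φ M) := by module
      _ = 0 := by rw [← e3, smul_zero]
  have e3'' : star (Φ M) + Φ M = 0 :=
    (smul_eq_zero.mp e3').resolve_left Complex.I_ne_zero
  -- P ⋄ M = 0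
  have argPM : star P * M - star M * P = 0 := by
    rw [sP, sM, hPdef, hMdef]
    simp only [smul_mul_assoc, one_mul, smul_smul, ← sub_smul]
    norm_num
  have e4 := hΦ P M
  rw [argPM, hP0, h0, sP, sM] at e4
  rw [hPdef] at e4
  simp [smul_mul_assoc, mul_smul_comm, smul_smul] at e4
  -- e4 : 0 = (1/2) • Φ M - (1/2) • star (Φ M)  (or similar)
  have sZ : star (Φ M) = -Φ M := eq_neg_of_add_eq_zero_left e3''
  rw [sZ] at e4
  have hfin : Φ M = (2⁻¹:ℂ) • Φ M - (2⁻¹:ℂ) • (-Φ M) := by module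
  rw [hfin]
  exact e4.symm
end

section
/- Let 𝒜 be a unital ∗-algebra over ℂ and let Φ : 𝒜 → 𝒜 be a nonlinear ⋄-derivation such that Φ(I/2) and Φ(iI/2) are self-adjoint. Then Φ(−iA) = −iΦ(A) for every A ∈ 𝒜. -/
/-- If `Φ` is a nonlinear `⋄`-derivation on a unital ∗-algebra over `ℂ`
with `Φ(I/2)` and `Φ(iI/2)` self-adjoint, then `Φ(−iA) = −iΦ(A)` for every `A`. -/
theorem stmt3 {𝒜 : Type*} [Ring 𝒜] [Algebra ℂ 𝒜] [StarRing 𝒜] [StarModule ℂ 𝒜]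
    (Φ : 𝒜 → 𝒜)
    (hΦ : ∀ A B : 𝒜, Φ (star A * B - star B * A) =
      (star (Φ A) * B - star B * Φ A) + (star A * Φ B - star (Φ B) * A))
    (h1 : star (Φ (((1 : ℂ)/2) • (1 : 𝒜))) = Φ (((1 : ℂ)/2) • (1 : 𝒜)))
    (h2 : star (Φ ((Complex.I/2) • (1 : 𝒜))) = Φ ((Complex.I/2) • (1 : 𝒜))) :
    ∀ A : 𝒜, Φ ((-Complex.I) • A) = (-Complex.I) • Φ A := by
  -- abbreviate
  -- Step 1: Φ(I/2) = 0 and Φ(iI/2) = 0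
  have harg1 : star (((1 : ℂ)/2) • (1 : 𝒜)) * ((Complex.I/2) • (1 : 𝒜))
      - star ((Complex.I/2) • (1 : 𝒜)) * (((1 : ℂ)/2) • (1 : 𝒜))
      = (Complex.I/2) • (1 : 𝒜) := by
    simp only [star_smul, star_one, smul_mul_assoc, mul_smul_comm, one_mul, mul_one, smul_smul]
    match_scalars <;> simp [Complex.ext_iff] <;> norm_num
  have e0 := hΦ (((1 : ℂ)/2) • (1 : 𝒜)) ((Complex.I/2) • (1 : 𝒜))
  rw [harg1, h1, h2] at e0
  have hQ : Φ ((Complex.I/2) • (1 : 𝒜)) = Complex.I • Φ (((1 : ℂ)/2) • (1 : 𝒜)) := by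
    rw [e0]
    simp only [star_smul, star_one, smul_mul_assoc, mul_smul_comm, one_mul, mul_one, smul_smul]
    match_scalars <;> simp [Complex.ext_iff] <;> norm_num
  have hP0 : Φ (((1 : ℂ)/2) • (1 : 𝒜)) = 0 := by
    have hst := h2
    rw [hQ, star_smul, h1] at hst
    have hD : star Complex.I • Φ (((1 : ℂ)/2) • (1 : 𝒜))
        - Complex.I • Φ (((1 : ℂ)/2) • (1 : 𝒜)) = 0 := by rw [hst, sub_self]
    have hc : Φ (((1 : ℂ)/2) • (1 : 𝒜)) = (Complex.I/2) •
        (star Complex.I • Φ (((1 : ℂ)/2) • (1 : 𝒜))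
          - Complex.I • Φ (((1 : ℂ)/2) • (1 : 𝒜))) := by
      match_scalars <;> simp [Complex.ext_iff] <;> norm_num
    rw [hD, smul_zero] at hc
    exact hc
  have hQ0 : Φ ((Complex.I/2) • (1 : 𝒜)) = 0 := by rw [hQ, hP0, smul_zero]
  -- Step 2: the main computation
  intro A
  have hargA : star (((1 : ℂ)/2) • (1 : 𝒜)) * ((-Complex.I) • A)
      - star ((-Complex.I) • A) * (((1 : ℂ)/2) • (1 : 𝒜))
      = star ((Complex.I/2) • (1 : 𝒜)) * A - star A * ((Complex.I/2) • (1 : 𝒜)) := by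
    simp only [star_smul, star_one, smul_mul_assoc, mul_smul_comm, one_mul, mul_one, smul_smul]
    match_scalars <;> simp [Complex.ext_iff] <;> norm_num
  have hargB : star ((-Complex.I) • A) * ((Complex.I/2) • (1 : 𝒜))
      - star ((Complex.I/2) • (1 : 𝒜)) * ((-Complex.I) • A)
      = star (((1 : ℂ)/2) • (1 : 𝒜)) * A - star A * (((1 : ℂ)/2) • (1 : 𝒜)) := by
    simp only [star_smul, star_one, smul_mul_assoc, mul_smul_comm, one_mul, mul_one, smul_smul]
    match_scalars <;> simp [Complex.ext_iff] <;> norm_num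
  have ea := hΦ (((1 : ℂ)/2) • (1 : 𝒜)) ((-Complex.I) • A)
  rw [hargA, hP0] at ea
  simp only [star_zero, zero_mul, mul_zero, sub_zero, zero_sub, neg_zero, zero_add, add_zero,
    sub_self] at ea
  have e4 := hΦ ((Complex.I/2) • (1 : 𝒜)) A
  rw [hQ0] at e4
  simp only [star_zero, zero_mul, mul_zero, sub_zero, zero_sub, neg_zero, zero_add, add_zero,
    sub_self] at e4
  have keyA := ea.symm.trans e4
  have eb := hΦ ((-Complex.I) • A) ((Complex.I/2) • (1 : 𝒜))
  rw [hargB, hQ0] at eb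
  simp only [star_zero, zero_mul, mul_zero, sub_zero, zero_sub, neg_zero, zero_add, add_zero,
    sub_self] at eb
  have e2 := hΦ (((1 : ℂ)/2) • (1 : 𝒜)) A
  rw [hP0] at e2
  simp only [star_zero, zero_mul, mul_zero, sub_zero, zero_sub, neg_zero, zero_add, add_zero,
    sub_self] at e2
  have keyB := eb.symm.trans e2
  -- combine
  have hc : Φ ((-Complex.I) • A) =
      (star (((1 : ℂ)/2) • (1 : 𝒜)) * Φ ((-Complex.I) • A)
        - star (Φ ((-Complex.I) • A)) * (((1 : ℂ)/2) • (1 : 𝒜)))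
      + (-Complex.I) • (star (Φ ((-Complex.I) • A)) * ((Complex.I/2) • (1 : 𝒜))
        - star ((Complex.I/2) • (1 : 𝒜)) * Φ ((-Complex.I) • A)) := by
    simp only [star_smul, star_one, smul_mul_assoc, mul_smul_comm, one_mul, mul_one, smul_smul,
      smul_sub]
    match_scalars <;> simp [Complex.ext_iff] <;> norm_num
  rw [keyA, keyB] at hc
  rw [hc]
  simp only [star_smul, star_one, smul_mul_assoc, mul_smul_comm, one_mul, mul_one, smul_smul,
    smul_sub]
  match_scalars <;> simp [Complex.ext_iff] <;> norm_num
end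

section
/- Let 𝒜 be a unital ∗-algebra over ℂ and let Φ : 𝒜 → 𝒜 be a nonlinear ⋄-derivation such that Φ(I/2) and Φ(iI/2) are self-adjoint. Then Φ(iA) = iΦ(A) for every A ∈ 𝒜. -/
/-- If `Φ` is a nonlinear `⋄`-derivation on a unital ∗-algebra over `ℂ`
with `Φ(I/2)` and `Φ(iI/2)` self-adjoint, then `Φ(iA) = iΦ(A)` for every `A`. -/
theorem stmt4 {𝒜 : Type*} [Ring 𝒜] [Algebra ℂ 𝒜] [StarRing 𝒜] [StarModule ℂ 𝒜]
    (Φ : 𝒜 → 𝒜)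
    (hΦ : ∀ A B : 𝒜, Φ (star A * B - star B * A) =
      (star (Φ A) * B - star B * Φ A) + (star A * Φ B - star (Φ B) * A))
    (h1 : star (Φ (((1 : ℂ)/2) • (1 : 𝒜))) = Φ (((1 : ℂ)/2) • (1 : 𝒜)))
    (h2 : star (Φ ((Complex.I/2) • (1 : 𝒜))) = Φ ((Complex.I/2) • (1 : 𝒜))) :
    ∀ A : 𝒜, Φ (Complex.I • A) = Complex.I • Φ A := by
  set P : 𝒜 := ((1 : ℂ)/2) • (1 : 𝒜) with hPdef
  set Q : 𝒜 := (Complex.I/2) • (1 : 𝒜) with hQdef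
  have hsP : star P = P := by
    rw [hPdef, star_smul, star_one]
    norm_num [Complex.star_def]
  have hsQ : star Q = (-(Complex.I/2)) • (1 : 𝒜) := by
    rw [hQdef, star_smul, star_one]
    norm_num [Complex.star_def, Complex.conj_I, neg_div]
  -- Step 1: Φ P = 0 and Φ Q = 0
  have e0 : star P * Q - star Q * P = Q := by
    rw [hsP, hsQ, hPdef, hQdef]
    simp only [smul_mul_assoc, mul_smul_comm, one_mul, mul_one, smul_smul]
    match_scalars <;> ring
  have key := hΦ P Q
  rw [e0, h1, h2, hsP, hsQ] at key
  have hQP : Φ Q = Complex.I • Φ P := by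
    rw [key, hPdef, hQdef]
    simp only [smul_mul_assoc, mul_smul_comm, one_mul, mul_one, smul_smul]
    match_scalars <;> ring
  have h3 : Complex.I • Φ P = (-Complex.I) • Φ P := by
    conv_lhs => rw [← hQP, ← h2]
    rw [hQP, star_smul, h1, Complex.star_def, Complex.conj_I]
  have hP0 : Φ P = 0 := by
    have h4 : ((2 : ℂ) * Complex.I) • Φ P = 0 := by
      have h5 := sub_eq_zero.mpr h3
      rw [← sub_smul] at h5
      convert h5 using 2
      ring
    calc Φ P = (((2 : ℂ) * Complex.I)⁻¹ * ((2 : ℂ) * Complex.I)) • Φ P := by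
          rw [inv_mul_cancel₀ (by simp [Complex.I_ne_zero]), one_smul]
      _ = 0 := by rw [mul_smul, h4, smul_zero]
  have hQ0 : Φ Q = 0 := by rw [hQP, hP0, smul_zero]
  -- Step 2: the two key equations for arbitrary A
  intro A
  set X : 𝒜 := Φ (Complex.I • A) with hXdef
  set Y : 𝒜 := Φ A with hYdef
  have a1 : star P * (Complex.I • A) - star (Complex.I • A) * P = star A * Q - star Q * A := by
    rw [hsP, hsQ, hPdef, hQdef, star_smul, Complex.star_def, Complex.conj_I]
    simp only [smul_mul_assoc, mul_smul_comm, one_mul, mul_one, smul_smul]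
    match_scalars <;> (try ring1) <;> (ring_nf; simp [Complex.I_sq]; try norm_num)
  have a2 : star (Complex.I • A) * Q - star Q * (Complex.I • A) = star A * P - star P * A := by
    rw [hsP, hsQ, hPdef, hQdef, star_smul, Complex.star_def, Complex.conj_I]
    simp only [smul_mul_assoc, mul_smul_comm, one_mul, mul_one, smul_smul]
    match_scalars <;> (try ring1) <;> (ring_nf; simp [Complex.I_sq]; try norm_num)
  have E1 : star P * X - star X * P = star Y * Q - star Q * Y := by
    have h := (hΦ P (Complex.I • A)).symm.trans ((congrArg Φ a1).trans (hΦ A Q))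
    rw [hP0, hQ0] at h
    simpa using h
  have E2 : star X * Q - star Q * X = star Y * P - star P * Y := by
    have h := (hΦ (Complex.I • A) Q).symm.trans ((congrArg Φ a2).trans (hΦ A P))
    rw [hP0, hQ0] at h
    simpa using h
  -- Combine
  rw [hsP, hsQ, hPdef, hQdef] at E1 E2
  simp only [smul_mul_assoc, mul_smul_comm, neg_mul, neg_smul, one_mul, mul_one, smul_smul,
    sub_neg_eq_add] at E1 E2
  show X = Complex.I • Y
  linear_combination (norm := match_scalars <;> (try ring1) <;> (ring_nf; simp [Complex.I_sq]; try norm_num))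
    E1 - Complex.I • E2
end

section
/- Let 𝒜 be a prime unital ∗-algebra over ℂ containing a nontrivial projection P₁, let P₂ = I − P₁, and let Φ : 𝒜 → 𝒜 be a nonlinear ⋄-derivation such that Φ(I/2) and Φ(iI/2) are self-adjoint. Then for every A₁₁ ∈ 𝒜₁₁ and A₁₂ ∈ 𝒜₁₂ one has Φ(A₁₁ + A₁₂) = Φ(A₁₁) + Φ(A₁₂). -/
set_option linter.unusedSectionVars false

namespace Stmt5Aux

variable {𝒜 : Type*} [Ring 𝒜] [Algebra ℂ 𝒜] [StarRing 𝒜] [StarModule ℂ 𝒜]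

/-- The skew product `A ⋄ B = A*B − B*A`. -/
def dmd (A B : 𝒜) : 𝒜 := star A * B - star B * A

lemma dmd_def (A B : 𝒜) : dmd A B = star A * B - star B * A := rfl

lemma dmd_add_right (C Y Z : 𝒜) : dmd C (Y + Z) = dmd C Y + dmd C Z := by
  simp only [dmd, star_add, mul_add, add_mul]; abel

lemma dmd_add_left (Y Z D : 𝒜) : dmd (Y + Z) D = dmd Y D + dmd Z D := by
  simp only [dmd, star_add, mul_add, add_mul]; abel

section
variable (Φ : 𝒜 → 𝒜)
    (hΦ : ∀ A B : 𝒜, Φ (star A * B - star B * A) =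
      (star (Φ A) * B - star B * Φ A) + (star A * Φ B - star (Φ B) * A))

include hΦ

lemma key : ∀ A B : 𝒜, Φ (dmd A B) = dmd (Φ A) B + dmd A (Φ B) := fun A B => hΦ A B

lemma phi0 : Φ 0 = 0 := by simpa using hΦ 0 0

lemma p1 (C Y Z : 𝒜) :
    Φ (dmd C (Y + Z)) - Φ (dmd C Y) - Φ (dmd C Z)
      = dmd C (Φ (Y + Z) - Φ Y - Φ Z) := by
  rw [key Φ hΦ, key Φ hΦ, key Φ hΦ]
  simp only [dmd, star_add, star_sub, mul_add, add_mul, mul_sub, sub_mul]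
  abel

lemma p2 (Y Z D : 𝒜) :
    Φ (dmd (Y + Z) D) - Φ (dmd Y D) - Φ (dmd Z D)
      = dmd (Φ (Y + Z) - Φ Y - Φ Z) D := by
  rw [key Φ hΦ, key Φ hΦ, key Φ hΦ]
  simp only [dmd, star_add, star_sub, mul_add, add_mul, mul_sub, sub_mul]
  abel

lemma cor1 (C Y Z : 𝒜) (hz : dmd C Z = 0) :
    dmd C (Φ (Y + Z) - Φ Y - Φ Z) = 0 := by
  rw [← p1 Φ hΦ, dmd_add_right, hz, add_zero, phi0 Φ hΦ, sub_zero, sub_self]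

lemma rowl (e Y Z : 𝒜) (he : star e = e) (hz : e * Z = 0) :
    e * (Φ (Y + Z) - Φ Y - Φ Z) = 0 ∧
      star (Φ (Y + Z) - Φ Y - Φ Z) * e = 0 := by
  set R := Φ (Y + Z) - Φ Y - Φ Z with hR
  have hze : star Z * e = 0 := by
    have h0 : star (e * Z) = 0 := by rw [hz, star_zero]
    rwa [star_mul, he] at h0
  have h1 : dmd e R = 0 := by
    apply cor1 Φ hΦ e Y Z
    rw [dmd_def, he, hz, hze, sub_zero]
  have h2 : dmd ((Complex.I : ℂ) • e) R = 0 := by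
    apply cor1 Φ hΦ _ Y Z
    rw [dmd_def, star_smul, smul_mul_assoc, mul_smul_comm, he, hz, hze,
      smul_zero, smul_zero, sub_zero]
  rw [dmd_def, he] at h1
  rw [dmd_def, star_smul, smul_mul_assoc, mul_smul_comm, he] at h2
  have heq : e * R = star R * e := sub_eq_zero.mp h1
  rw [← heq] at h2
  have hsI : (star Complex.I : ℂ) = -Complex.I := by
    simp [Complex.star_def, Complex.conj_I]
  rw [hsI, neg_smul] at h2
  -- h2 : -(I • (e*R)) - I • (e*R) = 0
  have hyy : Complex.I • (e * R) + Complex.I • (e * R) = 0 := by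
    have hneg : -(Complex.I • (e * R) + Complex.I • (e * R))
        = -(Complex.I • (e * R)) - Complex.I • (e * R) := by abel
    have h0 : -(Complex.I • (e * R) + Complex.I • (e * R)) = 0 := by
      rw [hneg]; exact h2
    exact neg_eq_zero.mp h0
  have h2y : ((2 : ℂ) * Complex.I) • (e * R) = 0 := by
    rw [mul_smul, two_smul]; exact hyy
  have h2I : ((2 : ℂ) * Complex.I) ≠ 0 :=
    mul_ne_zero two_ne_zero Complex.I_ne_zero
  have heR : e * R = 0 := by
    have := congrArg (fun z => ((2 : ℂ) * Complex.I)⁻¹ • z) h2y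
    simpa [smul_smul, inv_mul_cancel₀ h2I] using this
  exact ⟨heR, by rw [← heq, heR]⟩

lemma split (P₁ : 𝒜) (hP₁star : star P₁ = P₁) (U V : 𝒜)
    (hU : (1 - P₁) * U = 0) (hV : P₁ * V = 0) :
    Φ (U + V) = Φ U + Φ V := by
  have h1 := (rowl Φ hΦ P₁ U V hP₁star hV).1
  have h2 := (rowl Φ hΦ (1 - P₁) V U
    (by rw [star_sub, star_one, hP₁star]) hU).1
  have hcomm : Φ (V + U) - Φ V - Φ U = Φ (U + V) - Φ U - Φ V := by
    rw [add_comm V U]; abel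
  rw [hcomm] at h2
  have hR : Φ (U + V) - Φ U - Φ V = 0 := by
    have e1 : Φ (U + V) - Φ U - Φ V
        = P₁ * (Φ (U + V) - Φ U - Φ V)
          + (1 - P₁) * (Φ (U + V) - Φ U - Φ V) := by noncomm_ring
    rw [e1, h1, h2, add_zero]
  rw [sub_sub] at hR
  exact sub_eq_zero.mp hR

end

lemma hz2 {p q : 𝒜} (h : p * q = 0) (r : 𝒜) : p * (q * r) = 0 := by
  rw [← mul_assoc, h, zero_mul]

lemma hz3 {p q : 𝒜} (h : p * q = 0) (u v : 𝒜) : p * (q * u * v) = 0 := by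
  rw [show p * (q * u * v) = (p * q) * (u * v) from by noncomm_ring, h, zero_mul]

end Stmt5Aux

/-- In a prime unital ∗-algebra over `ℂ` with nontrivial projection `P₁`
and `P₂ = I − P₁`, a nonlinear `⋄`-derivation `Φ` with `Φ(I/2)`, `Φ(iI/2)` self-adjoint
satisfies `Φ(A₁₁ + A₁₂) = Φ(A₁₁) + Φ(A₁₂)` on the Peirce components `𝒜₁₁`, `𝒜₁₂`. -/
theorem stmt5 {𝒜 : Type*} [Ring 𝒜] [Algebra ℂ 𝒜] [StarRing 𝒜] [StarModule ℂ 𝒜]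
    (hprime : ∀ a b : 𝒜, (∀ x : 𝒜, a * x * b = 0) → a = 0 ∨ b = 0)
    (P₁ : 𝒜) (hP₁star : star P₁ = P₁) (hP₁idem : P₁ * P₁ = P₁)
    (hP₁ne0 : P₁ ≠ 0) (hP₁ne1 : P₁ ≠ 1)
    (Φ : 𝒜 → 𝒜)
    (hΦ : ∀ A B : 𝒜, Φ (star A * B - star B * A) =
      (star (Φ A) * B - star B * Φ A) + (star A * Φ B - star (Φ B) * A))
    (h1 : star (Φ (((1 : ℂ)/2) • (1 : 𝒜))) = Φ (((1 : ℂ)/2) • (1 : 𝒜)))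
    (h2 : star (Φ ((Complex.I/2) • (1 : 𝒜))) = Φ ((Complex.I/2) • (1 : 𝒜))) :
    ∀ A₁₁ A₁₂ : 𝒜, (∃ x : 𝒜, A₁₁ = P₁ * x * P₁) →
      (∃ x : 𝒜, A₁₂ = P₁ * x * (1 - P₁)) →
      Φ (A₁₁ + A₁₂) = Φ A₁₁ + Φ A₁₂ := by
  clear h1 h2
  rintro A₁₁ A₁₂ ⟨x, rfl⟩ ⟨y, rfl⟩
  open Stmt5Aux in
  set P₂ : 𝒜 := 1 - P₁ with hP₂def
  have hP₂star : star P₂ = P₂ := by rw [hP₂def, star_sub, star_one, hP₁star]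
  have hP21 : P₂ * P₁ = 0 := by rw [hP₂def, sub_mul, one_mul, hP₁idem, sub_self]
  have hP12 : P₁ * P₂ = 0 := by rw [hP₂def, mul_sub, mul_one, hP₁idem, sub_self]
  have hP₂ne : P₂ ≠ 0 := by
    intro h
    exact hP₁ne1 (by rw [hP₂def] at h; exact (sub_eq_zero.mp h).symm)
  set A : 𝒜 := P₁ * x * P₁ with hA
  set B : 𝒜 := P₁ * y * P₂ with hB
  set T : 𝒜 := Φ (A + B) - Φ A - Φ B with hT
  have hstarA : star A = P₁ * star x * P₁ := by
    rw [hA, star_mul, star_mul, hP₁star, mul_assoc]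
  have hstarB : star B = P₂ * star y * P₁ := by
    rw [hB, star_mul, star_mul, hP₁star, hP₂star, mul_assoc]
  have hP2A : P₂ * A = 0 := by rw [hA]; exact hz3 hP21 x P₁
  have hP2B : P₂ * B = 0 := by rw [hB]; exact hz3 hP21 y P₂
  have hP2starA : P₂ * star A = 0 := by rw [hstarA]; exact hz3 hP21 (star x) P₁
  have hP1starB : P₁ * star B = 0 := by rw [hstarB]; exact hz3 hP12 (star y) P₁
  -- Step 1 : star T * P₂ = 0, hence star T * P₁ = star T
  have hstep1 := Stmt5Aux.rowl Φ hΦ P₂ A B hP₂star hP2B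
  have hTP2 : star T * P₂ = 0 := by rw [hT]; exact hstep1.2
  have hTP1 : star T * P₁ = star T := by
    have : star T * P₁ = star T * 1 - star T * P₂ := by
      rw [hP₂def]; noncomm_ring
    rw [this, hTP2, mul_one, sub_zero]
  -- Step 2 : P₁ * star T = 0
  have hstep2 : P₁ * star T = 0 := by
    have hkey : ∀ d : 𝒜, (P₁ * star T) * d * P₂ = 0 := by
      intro d
      set D : 𝒜 := P₁ * d * P₂ with hD
      have hstarD : star D = P₂ * star d * P₁ := by
        rw [hD, star_mul, star_mul, hP₁star, hP₂star, mul_assoc]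
      have hP1starD : P₁ * star D = 0 := by
        rw [hstarD]; exact hz3 hP12 (star d) P₁
      set U₀ : 𝒜 := star A * D with hU₀
      set W₁ : 𝒜 := -(star D * A) with hW₁
      set W₂ : 𝒜 := dmd B D with hW₂
      have hU₀z : P₂ * U₀ = 0 := by rw [hU₀]; exact hz2 hP2starA D
      have hW₁z : P₁ * W₁ = 0 := by rw [hW₁, mul_neg, hz2 hP1starD A, neg_zero]
      have hW₂z : P₁ * W₂ = 0 := by
        rw [hW₂, dmd_def, mul_sub, hz2 hP1starB D, hz2 hP1starD B, sub_self]
      have hAD : dmd A D = U₀ + W₁ := by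
        rw [dmd_def, hU₀, hW₁, sub_eq_add_neg]
      have hMD : dmd (A + B) D = U₀ + (W₁ + W₂) := by
        rw [dmd_add_left, hAD, hW₂, add_assoc]
      have hsplit1 : Φ (U₀ + (W₁ + W₂)) = Φ U₀ + Φ (W₁ + W₂) := by
        apply Stmt5Aux.split Φ hΦ P₁ hP₁star
        · rw [← hP₂def]; exact hU₀z
        · rw [mul_add, hW₁z, hW₂z, add_zero]
      have hsplit2 : Φ (U₀ + W₁) = Φ U₀ + Φ W₁ := by
        apply Stmt5Aux.split Φ hΦ P₁ hP₁star
        · rw [← hP₂def]; exact hU₀z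
        · exact hW₁z
      have hrow := (Stmt5Aux.rowl Φ hΦ P₁ W₁ W₂ hP₁star hW₂z).1
      have hdTD : dmd T D = Φ (W₁ + W₂) - Φ W₁ - Φ W₂ := by
        have hp2 := Stmt5Aux.p2 Φ hΦ A B D
        rw [hT, ← hp2, hMD, hsplit1, hAD, hsplit2, hW₂]
        abel
      have h0 : P₁ * dmd T D = 0 := by rw [hdTD]; exact hrow
      rw [dmd_def, mul_sub, hz2 hP1starD T, sub_zero] at h0
      -- h0 : P₁ * (star T * D) = 0
      have hre : (P₁ * star T) * d * P₂ = P₁ * (star T * D) := by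
        rw [hD, show P₁ * (star T * (P₁ * d * P₂))
          = (P₁ * (star T * P₁)) * d * P₂ from by noncomm_ring, hTP1]
      rw [hre]; exact h0
    rcases hprime (P₁ * star T) P₂ hkey with h | h
    · exact h
    · exact absurd h hP₂ne
  -- Step 3 : P₂ * star T = 0
  have hstep3 : P₂ * star T = 0 := by
    have hkey : ∀ d : 𝒜, (P₂ * star T) * d * P₁ = 0 := by
      intro d
      set D : 𝒜 := P₁ * d * P₁ with hD
      have hstarD : star D = P₁ * star d * P₁ := by
        rw [hD, star_mul, star_mul, hP₁star, mul_assoc]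
      have hP2starD : P₂ * star D = 0 := by
        rw [hstarD]; exact hz3 hP21 (star d) P₁
      set V₁ : 𝒜 := star B * D with hV₁
      set W : 𝒜 := -(star D * B) with hW
      have hV₁z : P₁ * V₁ = 0 := by rw [hV₁]; exact hz2 hP1starB D
      have hWz : P₂ * W = 0 := by rw [hW, mul_neg, hz2 hP2starD B, neg_zero]
      have hADz : P₂ * dmd A D = 0 := by
        rw [dmd_def, mul_sub, hz2 hP2starA D, hz2 hP2starD A, sub_self]
      have hBD : dmd B D = W + V₁ := by
        rw [dmd_def, hV₁, hW]; abel
      have hMD : dmd (A + B) D = (dmd A D + W) + V₁ := by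
        rw [dmd_add_left, hBD]; abel
      have hsplit1 : Φ ((dmd A D + W) + V₁) = Φ (dmd A D + W) + Φ V₁ := by
        apply Stmt5Aux.split Φ hΦ P₁ hP₁star
        · rw [← hP₂def, mul_add, hADz, hWz, add_zero]
        · exact hV₁z
      have hsplit2 : Φ (W + V₁) = Φ W + Φ V₁ := by
        apply Stmt5Aux.split Φ hΦ P₁ hP₁star
        · rw [← hP₂def]; exact hWz
        · exact hV₁z
      have hrow := (Stmt5Aux.rowl Φ hΦ P₂ (dmd A D) W hP₂star hWz).1
      have hdTD : dmd T D = Φ (dmd A D + W) - Φ (dmd A D) - Φ W := by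
        have hp2 := Stmt5Aux.p2 Φ hΦ A B D
        rw [hT, ← hp2, hMD, hsplit1, hBD, hsplit2]
        abel
      have h0 : P₂ * dmd T D = 0 := by rw [hdTD]; exact hrow
      rw [dmd_def, mul_sub, hz2 hP2starD T, sub_zero] at h0
      have hre : (P₂ * star T) * d * P₁ = P₂ * (star T * D) := by
        rw [hD, show P₂ * (star T * (P₁ * d * P₁))
          = (P₂ * (star T * P₁)) * d * P₁ from by noncomm_ring, hTP1]
      rw [hre]; exact h0
    rcases hprime (P₂ * star T) P₁ hkey with h | h
    · exact h
    · exact absurd h hP₁ne0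
  -- Finish
  have hstarT : star T = 0 := by
    have e1 : star T = P₁ * star T + P₂ * star T := by
      rw [hP₂def]; noncomm_ring
    rw [e1, hstep2, hstep3, add_zero]
  have hT0 : T = 0 := by
    have := congrArg star hstarT
    rwa [star_star, star_zero] at this
  rw [hT] at hT0
  rw [sub_sub] at hT0
  exact sub_eq_zero.mp hT0
end

section
/- Let 𝒜 be a prime unital ∗-algebra over ℂ containing a nontrivial projection P₁, let P₂ = I − P₁, and let Φ : 𝒜 → 𝒜 be a nonlinear ⋄-derivation such that Φ(I/2) and Φ(iI/2) are self-adjoint. Then for every A₁₁ ∈ 𝒜₁₁, A₁₂ ∈ 𝒜₁₂ and A₂₁ ∈ 𝒜₂₁ one has Φ(A₁₁ + A₁₂ + A₂₁) = Φ(A₁₁) + Φ(A₁₂) + Φ(A₂₁). -/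
set_option linter.unusedSectionVars false

namespace Stmt6Aux

variable {𝒜 : Type*} [Ring 𝒜] [Algebra ℂ 𝒜] [StarRing 𝒜] [StarModule ℂ 𝒜]

/-- The skew product `A ⋄ B`. -/
def D (X Y : 𝒜) : 𝒜 := star X * Y - star Y * X

lemma D_add_right (X Y Z : 𝒜) : D X (Y + Z) = D X Y + D X Z := by
  simp [D, mul_add, add_mul, star_add]; abel

lemma D_sub_right (X Y Z : 𝒜) : D X (Y - Z) = D X Y - D X Z := by
  simp [D, mul_sub, sub_mul, star_sub]; abel

lemma D_zero_right (X : 𝒜) : D X (0 : 𝒜) = 0 := by simp [D]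

variable (Φ : 𝒜 → 𝒜)

lemma phi_zero (hΦ : ∀ A B : 𝒜, Φ (D A B) = D (Φ A) B + D A (Φ B)) : Φ (0 : 𝒜) = 0 := by
  have := hΦ 0 0
  simpa [D] using this

lemma coreCancel (hΦ : ∀ A B : 𝒜, Φ (D A B) = D (Φ A) B + D A (Φ B))
    (X A B C : 𝒜) (hC : D X C = 0) :
    D X (Φ (A + B + C) - Φ A - Φ B - Φ C)
      = Φ (D X A + D X B) - Φ (D X A) - Φ (D X B) := by
  have hz : Φ (0 : 𝒜) = 0 := phi_zero Φ hΦ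
  have e1 := hΦ X (A + B + C)
  rw [show D X (A + B + C) = D X A + D X B by
        rw [D_add_right, D_add_right, hC, add_zero],
      show D (Φ X) (A + B + C) = D (Φ X) A + D (Φ X) B + D (Φ X) C by
        rw [D_add_right, D_add_right]] at e1
  have e2 := hΦ X A
  have e3 := hΦ X B
  have e4 := hΦ X C
  rw [hC, hz] at e4
  have e4' : D (Φ X) C = - D X (Φ C) :=
    eq_neg_of_add_eq_zero_left e4.symm
  rw [D_sub_right, D_sub_right, D_sub_right, e1, e2, e3, e4']
  abel

lemma killD (Q w A : 𝒜) (hQs : star Q = Q) (hQA : Q * A = 0) : D (Q * w) A = 0 := by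
  have h1 : star (Q * w) * A = star w * (Q * A) := by
    rw [star_mul, hQs, mul_assoc]
  have h2 : star A * (Q * w) = (star A * Q) * w := by rw [mul_assoc]
  have h3 : star A * Q = 0 := by
    have := congrArg star hQA
    rwa [star_mul, hQs, star_zero] at this
  rw [D, h1, h2, h3, hQA, mul_zero, zero_mul, sub_zero]

lemma qmul_eq_zero (Q M : 𝒜) (hQs : star Q = Q)
    (h : ∀ w : 𝒜, D (Q * w) M = 0) : Q * M = 0 := by
  have e1 : Q * M - star M * Q = 0 := by
    have := h 1
    simpa [D, star_mul, hQs] using this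
  have e1' : star M * Q = Q * M := by
    have := sub_eq_zero.mp e1
    exact this.symm
  have e2 := h (Complex.I • (1 : 𝒜))
  rw [D] at e2
  have l1 : star (Q * (Complex.I • (1 : 𝒜))) = (-Complex.I) • Q := by
    rw [star_mul, hQs, star_smul, star_one]
    simp [smul_mul_assoc, Complex.star_def, Complex.conj_I]
  have l2 : Q * (Complex.I • (1 : 𝒜)) = Complex.I • Q := by
    rw [mul_smul_comm, mul_one]
  rw [l1, l2, smul_mul_assoc, mul_smul_comm, e1'] at e2
  have e3 : (-Complex.I - Complex.I) • (Q * M) = 0 := by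
    rw [sub_smul]; exact e2
  have hne : (-Complex.I - Complex.I) ≠ 0 := by
    intro hcon
    apply Complex.I_ne_zero
    have : (-2 : ℂ) * Complex.I = 0 := by linear_combination hcon
    exact (mul_eq_zero.mp this).resolve_left (by norm_num)
  have := congrArg (fun y => (-Complex.I - Complex.I)⁻¹ • y) e3
  simpa [smul_smul, inv_mul_cancel₀ hne] using this

/-- If `(1-P)` left-annihilates `A` and `B`, the additivity defect of `A+B+C` is
left-annihilated by `1-P` (for any `C`). -/
lemma stepB (hΦ : ∀ A B : 𝒜, Φ (D A B) = D (Φ A) B + D A (Φ B))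
    (P : 𝒜) (hPs : star P = P) (A B C : 𝒜)
    (hA : (1 - P) * A = 0) (hB : (1 - P) * B = 0) :
    (1 - P) * (Φ (A + B + C) - Φ A - Φ B - Φ C) = 0 := by
  set Q : 𝒜 := 1 - P with hQ
  have hQs : star Q = Q := by rw [hQ, star_sub, star_one, hPs]
  have hz : Φ (0 : 𝒜) = 0 := phi_zero Φ hΦ
  apply qmul_eq_zero Q _ hQs
  intro w
  have hdc : Φ (A + B + C) - Φ A - Φ B - Φ C
      = Φ (C + B + A) - Φ C - Φ B - Φ A := by
    rw [show A + B + C = C + B + A by abel]; abel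
  rw [hdc]
  have kA : D (Q * w) A = 0 := killD Q w A hQs hA
  have kB : D (Q * w) B = 0 := killD Q w B hQs hB
  have := coreCancel Φ hΦ (Q * w) C B A kA
  rw [kB, add_zero] at this
  rw [this, hz]
  abel

/-- Pair additivity: `A` in the `P`-row, `C` in the `(1-P)`-row. -/
lemma pairAdd (hΦ : ∀ A B : 𝒜, Φ (D A B) = D (Φ A) B + D A (Φ B))
    (P : 𝒜) (hPs : star P = P) (A C : 𝒜)
    (hA : (1 - P) * A = 0) (hC : P * C = 0) : Φ (A + C) = Φ A + Φ C := by
  have hz : Φ (0 : 𝒜) = 0 := phi_zero Φ hΦ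
  have hQs : star (1 - P) = 1 - P := by rw [star_sub, star_one, hPs]
  have h1 := stepB Φ hΦ P hPs A 0 C hA (mul_zero _)
  have h2 := stepB Φ hΦ (1 - P) hQs C 0 A (by simpa using hC) (by simp)
  rw [show A + 0 + C = A + C by abel, hz, sub_zero] at h1
  rw [show C + 0 + A = A + C by abel, hz, sub_zero,
      show (1 : 𝒜) - (1 - P) = P by abel] at h2
  have key : Φ (A + C) - Φ A - Φ C = 0 := by
    have : Φ (A + C) - Φ A - Φ C
        = P * (Φ (A + C) - Φ C - Φ A) + (1 - P) * (Φ (A + C) - Φ A - Φ C) := by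
      noncomm_ring
    rw [this, h1, h2, add_zero]
  have := sub_eq_zero.mp (by rw [show Φ (A+C) - Φ A - Φ C = Φ (A+C) - (Φ A + Φ C) by abel] at key; exact key)
  exact this

/-- `P M P = 0` for the additivity defect of the triple. -/
lemma stepC (hΦ : ∀ A B : 𝒜, Φ (D A B) = D (Φ A) B + D A (Φ B))
    (hprime : ∀ a b : 𝒜, (∀ x : 𝒜, a * x * b = 0) → a = 0 ∨ b = 0)
    (P : 𝒜) (hPs : star P = P) (hPi : P * P = P) (hQne : (1 : 𝒜) - P ≠ 0)
    (A B C : 𝒜) (hA2 : A * P = A) (hB2 : B * (1 - P) = B) (hC1 : (1 - P) * C = C) :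
    P * (Φ (A + B + C) - Φ A - Φ B - Φ C) * P = 0 := by
  set Q : 𝒜 := 1 - P with hQdef
  have hQs : star Q = Q := by rw [hQdef, star_sub, star_one, hPs]
  have hPQ : P * Q = 0 := by rw [hQdef, mul_sub, mul_one, hPi, sub_self]
  have hQP : Q * P = 0 := by rw [hQdef, sub_mul, one_mul, hPi, sub_self]
  have h1Q : (1 : 𝒜) - Q = P := by rw [hQdef]; abel
  set M : 𝒜 := Φ (A + B + C) - Φ A - Φ B - Φ C with hM
  have key : ∀ w : 𝒜, P * star M * P * w * Q = 0 := by
    intro w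
    set X : 𝒜 := P * (w * Q) with hX
    have hstarX : star X = Q * star w * P := by
      rw [hX, star_mul, star_mul, hQs, hPs]
    have hPC : P * C = 0 := by rw [← hC1, ← mul_assoc, hPQ, zero_mul]
    have kC : D X C = 0 := killD P (w * Q) C hPs hPC
    have core := coreCancel Φ hΦ X A B C kC
    rw [← hM] at core
    set c' : 𝒜 := star X * A with hc'def
    set b' : 𝒜 := -(star A * X) with hb'def
    set v : 𝒜 := D X B with hvdef
    have hDXA : D X A = b' + c' := by rw [D, hc'def, hb'def]; abel
    have hstarA : star A = P * star A := by
      conv_lhs => rw [← hA2]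
      rw [star_mul, hPs]
    have hstarB : star B = Q * star B := by
      conv_lhs => rw [← hB2]
      rw [star_mul, hQs]
    have hQsA : Q * star A = 0 := by
      have := congrArg (fun y => Q * y) hstarA
      rwa [← mul_assoc, hQP, zero_mul] at this
    have hPsB : P * star B = 0 := by
      have := congrArg (fun y => P * y) hstarB
      rwa [← mul_assoc, hPQ, zero_mul] at this
    have hb' : Q * b' = 0 := by
      rw [hb'def, mul_neg, neg_eq_zero, ← mul_assoc, hQsA, zero_mul]
    have hc' : P * c' = 0 := by
      rw [hc'def, hstarX]
      simp only [← mul_assoc]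
      rw [hPQ]
      simp
    have hv : P * v = 0 := by
      rw [hvdef, D, hstarX, mul_sub]
      simp only [← mul_assoc]
      rw [hPQ, hPsB]
      simp
    have pair2 : Φ (b' + c') = Φ b' + Φ c' := pairAdd Φ hΦ P hPs b' c' hb' hc'
    have sB := stepB Φ hΦ Q hQs c' v b' (by rw [h1Q]; exact hc') (by rw [h1Q]; exact hv)
    rw [h1Q] at sB
    have hfin : P * D X M = 0 := by
      rw [core, hDXA, pair2,
          show Φ (b' + c' + v) - (Φ b' + Φ c') - Φ v
            = Φ (c' + v + b') - Φ c' - Φ v - Φ b' by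
              rw [show b' + c' + v = c' + v + b' by abel]; abel]
      exact sB
    have expand : P * D X M = P * (star X * M) - P * (star M * X) := by
      rw [D, mul_sub]
    have t1 : P * (star X * M) = 0 := by
      rw [hstarX]
      simp only [← mul_assoc]
      rw [hPQ]
      simp
    have t2 : P * (star M * X) = P * star M * P * w * Q := by
      rw [hX]; simp only [mul_assoc]
    rw [expand, t1, zero_sub, neg_eq_zero, t2] at hfin
    exact hfin
  have hz := (hprime (P * star M * P) Q key).resolve_right hQne
  have hst := congrArg star hz
  rwa [star_mul, star_mul, star_star, hPs, star_zero, ← mul_assoc] at hst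

end Stmt6Aux

open Stmt6Aux


/-- In a prime unital ∗-algebra over `ℂ` with nontrivial projection `P₁`
and `P₂ = I − P₁`, a nonlinear `⋄`-derivation `Φ` with `Φ(I/2)`, `Φ(iI/2)` self-adjoint
satisfies `Φ(A₁₁ + A₁₂ + A₂₁) = Φ(A₁₁) + Φ(A₁₂) + Φ(A₂₁)`. -/
theorem stmt6 {𝒜 : Type*} [Ring 𝒜] [Algebra ℂ 𝒜] [StarRing 𝒜] [StarModule ℂ 𝒜]
    (hprime : ∀ a b : 𝒜, (∀ x : 𝒜, a * x * b = 0) → a = 0 ∨ b = 0)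
    (P₁ : 𝒜) (hP₁star : star P₁ = P₁) (hP₁idem : P₁ * P₁ = P₁)
    (hP₁ne0 : P₁ ≠ 0) (hP₁ne1 : P₁ ≠ 1)
    (Φ : 𝒜 → 𝒜)
    (hΦ : ∀ A B : 𝒜, Φ (star A * B - star B * A) =
      (star (Φ A) * B - star B * Φ A) + (star A * Φ B - star (Φ B) * A))
    (h1 : star (Φ (((1 : ℂ)/2) • (1 : 𝒜))) = Φ (((1 : ℂ)/2) • (1 : 𝒜)))
    (h2 : star (Φ ((Complex.I/2) • (1 : 𝒜))) = Φ ((Complex.I/2) • (1 : 𝒜))) :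
    ∀ A₁₁ A₁₂ A₂₁ : 𝒜, (∃ x : 𝒜, A₁₁ = P₁ * x * P₁) →
      (∃ x : 𝒜, A₁₂ = P₁ * x * (1 - P₁)) →
      (∃ x : 𝒜, A₂₁ = (1 - P₁) * x * P₁) →
      Φ (A₁₁ + A₁₂ + A₂₁) = Φ A₁₁ + Φ A₁₂ + Φ A₂₁ := by
  
  rintro A₁₁ A₁₂ A₂₁ ⟨x, hx⟩ ⟨y, hy⟩ ⟨z, hz⟩
  have hΦD : ∀ A B : 𝒜, Φ (D A B) = D (Φ A) B + D A (Φ B) := fun A B => by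
    simpa [D] using hΦ A B
  set Q : 𝒜 := 1 - P₁ with hQdef
  have hQs : star Q = Q := by rw [hQdef, star_sub, star_one, hP₁star]
  have hPQ : P₁ * Q = 0 := by rw [hQdef, mul_sub, mul_one, hP₁idem, sub_self]
  have hQP : Q * P₁ = 0 := by rw [hQdef, sub_mul, one_mul, hP₁idem, sub_self]
  have hQidem : Q * Q = Q := by
    rw [hQdef, mul_sub, mul_one, sub_mul, one_mul, hP₁idem, sub_self, sub_zero]
  have hQne : (1 : 𝒜) - P₁ ≠ 0 := sub_ne_zero.mpr (Ne.symm hP₁ne1)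
  -- Peirce facts
  have hA1 : Q * A₁₁ = 0 := by
    rw [hx]; simp only [← mul_assoc]; rw [hQP]; simp
  have hA2 : A₁₁ * P₁ = A₁₁ := by rw [hx, mul_assoc, hP₁idem]
  have hB1 : Q * A₁₂ = 0 := by
    rw [hy]; simp only [← mul_assoc]; rw [hQP]; simp
  have hB2 : A₁₂ * Q = A₁₂ := by rw [hy, mul_assoc, hQidem]
  have hC1 : Q * A₂₁ = A₂₁ := by
    rw [hz]; simp only [← mul_assoc]; rw [hQidem]
  have hPC : P₁ * A₂₁ = 0 := by
    rw [hz]; simp only [← mul_assoc]; rw [hPQ]; simp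
  set M : 𝒜 := Φ (A₁₁ + A₁₂ + A₂₁) - Φ A₁₁ - Φ A₁₂ - Φ A₂₁ with hM
  -- F1 : Q M = 0
  have F1 : Q * M = 0 := by
    have := stepB Φ hΦD P₁ hP₁star A₁₁ A₁₂ A₂₁ hA1 hB1
    rwa [← hQdef, ← hM] at this
  -- F2 : P M P = 0
  have F2 : P₁ * M * P₁ = 0 := by
    have := stepC Φ hΦD hprime P₁ hP₁star hP₁idem hQne A₁₁ A₁₂ A₂₁ hA2
      (by rwa [← hQdef]) (by rwa [← hQdef])
    rwa [← hM] at this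
  -- F3 : P M Q = 0
  have hstarA : star A₁₁ = P₁ * star A₁₁ := by
    conv_lhs => rw [← hA2]
    rw [star_mul, hP₁star]
  have hstarB : star A₁₂ = Q * star A₁₂ := by
    conv_lhs => rw [← hB2]
    rw [star_mul, hQs]
  have hQsA : Q * star A₁₁ = 0 := by
    have := congrArg (fun t => Q * t) hstarA
    rwa [← mul_assoc, hQP, zero_mul] at this
  have hPsB : P₁ * star A₁₂ = 0 := by
    have := congrArg (fun t => P₁ * t) hstarB
    rwa [← mul_assoc, hPQ, zero_mul] at this
  have key : ∀ w : 𝒜, Q * star M * P₁ * w * P₁ = 0 := by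
    intro w
    set X : 𝒜 := P₁ * (w * P₁) with hX
    have hstarX : star X = P₁ * star w * P₁ := by
      rw [hX, star_mul, star_mul, hP₁star]
    have kC : D X A₂₁ = 0 := killD P₁ (w * P₁) A₂₁ hP₁star hPC
    have core := coreCancel Φ hΦD X A₁₁ A₁₂ A₂₁ kC
    rw [← hM] at core
    set u : 𝒜 := D X A₁₁ with hu
    set v₁₂ : 𝒜 := star X * A₁₂ with hv12
    set v₂₁ : 𝒜 := -(star A₁₂ * X) with hv21
    have hDXB : D X A₁₂ = v₁₂ + v₂₁ := by rw [D, hv12, hv21]; abel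
    have hQu : Q * u = 0 := by
      rw [hu, D, mul_sub, hstarX]
      simp only [← mul_assoc]
      rw [hQP, hQsA]
      simp
    have hQv12 : Q * v₁₂ = 0 := by
      rw [hv12, hstarX]
      simp only [← mul_assoc]
      rw [hQP]
      simp
    have hPv21 : P₁ * v₂₁ = 0 := by
      rw [hv21, mul_neg, neg_eq_zero, ← mul_assoc, hPsB, zero_mul]
    have pair2 : Φ (v₁₂ + v₂₁) = Φ v₁₂ + Φ v₂₁ :=
      pairAdd Φ hΦD P₁ hP₁star v₁₂ v₂₁ hQv12 hPv21
    have sB := stepB Φ hΦD P₁ hP₁star u v₁₂ v₂₁ hQu hQv12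
    rw [← hQdef] at sB
    have hfin : Q * D X M = 0 := by
      rw [core, hDXB, pair2,
          show Φ (u + (v₁₂ + v₂₁)) - Φ u - (Φ v₁₂ + Φ v₂₁)
            = Φ (u + v₁₂ + v₂₁) - Φ u - Φ v₁₂ - Φ v₂₁ by
              rw [show u + (v₁₂ + v₂₁) = u + v₁₂ + v₂₁ by abel]; abel]
      exact sB
    have expand : Q * D X M = Q * (star X * M) - Q * (star M * X) := by
      rw [D, mul_sub]
    have t1 : Q * (star X * M) = 0 := by
      rw [hstarX]
      simp only [← mul_assoc]
      rw [hQP]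
      simp
    have t2 : Q * (star M * X) = Q * star M * P₁ * w * P₁ := by
      rw [hX]; simp only [mul_assoc]
    rw [expand, t1, zero_sub, neg_eq_zero, t2] at hfin
    exact hfin
  have hz3 := (hprime (Q * star M * P₁) P₁ key).resolve_right hP₁ne0
  have hst := congrArg star hz3
  rw [star_mul, star_mul, star_star, hP₁star, hQs, star_zero, ← mul_assoc] at hst
  -- combine
  have hM0 : M = 0 := by
    have hdecomp : M = P₁ * M * P₁ + P₁ * M * (1 - P₁) + (1 - P₁) * M := by
      noncomm_ring
    rw [hdecomp, ← hQdef, F2, hst, F1, add_zero, add_zero]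
  have := sub_eq_zero.mp (by
    rw [show M = Φ (A₁₁ + A₁₂ + A₂₁) - (Φ A₁₁ + Φ A₁₂ + Φ A₂₁) by rw [hM]; abel] at hM0
    exact hM0)
  exact this
end

section
/- Let 𝒜 be a prime unital ∗-algebra over ℂ containing a nontrivial projection P₁, let P₂ = I − P₁, and let Φ : 𝒜 → 𝒜 be a nonlinear ⋄-derivation such that Φ(I/2) and Φ(iI/2) are self-adjoint. Then for every A₁₂ ∈ 𝒜₁₂, A₂₁ ∈ 𝒜₂₁ and A₂₂ ∈ 𝒜₂₂ one has Φ(A₁₂ + A₂₁ + A₂₂) = Φ(A₁₂) + Φ(A₂₁) + Φ(A₂₂). -/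
section DstarHelpers

variable {A : Type*} [Ring A] [StarRing A]

private def dstar (C B : A) : A := star C * B - star B * C

private lemma dstar_add_right (C B₁ B₂ : A) :
    dstar C (B₁ + B₂) = dstar C B₁ + dstar C B₂ := by
  simp only [dstar, star_add, mul_add, add_mul]; abel

private lemma dstar_sub_right (C B₁ B₂ : A) :
    dstar C (B₁ - B₂) = dstar C B₁ - dstar C B₂ := by
  simp only [dstar, star_sub, mul_sub, sub_mul]; abel

private lemma star2 (Φ : A → A)
    (hΦ : ∀ C B : A, Φ (dstar C B) = dstar (Φ C) B + dstar C (Φ B))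
    (C B₁ B₂ : A) :
    dstar C (Φ (B₁ + B₂) - Φ B₁ - Φ B₂)
      = Φ (dstar C (B₁ + B₂)) - Φ (dstar C B₁) - Φ (dstar C B₂) := by
  rw [dstar_sub_right, dstar_sub_right, hΦ C (B₁ + B₂), hΦ C B₁, hΦ C B₂,
    dstar_add_right]
  abel

private lemma star3 (Φ : A → A)
    (hΦ : ∀ C B : A, Φ (dstar C B) = dstar (Φ C) B + dstar C (Φ B))
    (C B₁ B₂ B₃ : A) :
    dstar C (Φ (B₁ + B₂ + B₃) - Φ B₁ - Φ B₂ - Φ B₃)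
      = Φ (dstar C (B₁ + B₂ + B₃)) - Φ (dstar C B₁) - Φ (dstar C B₂) - Φ (dstar C B₃) := by
  rw [dstar_sub_right, dstar_sub_right, dstar_sub_right, hΦ C (B₁ + B₂ + B₃),
    hΦ C B₁, hΦ C B₂, hΦ C B₃, dstar_add_right, dstar_add_right]
  abel

private def u11 (P u : A) : A := P * u * P - P * star u * P

private def m12 (P Q z : A) : A := P * z * Q - Q * star z * P

private def u22 (Q w : A) : A := Q * w * Q - Q * star w * Q

end DstarHelpers

section ModuleHelpers

variable {A : Type*} [AddCommGroup A] [Module ℂ A]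

private lemma csmul_cancel (c : ℂ) (hc : c ≠ 0) (x : A) (h : c • x = 0) : x = 0 := by
  have h2 := congrArg (fun y => c⁻¹ • y) h
  simpa [smul_smul, inv_mul_cancel₀ hc] using h2

private lemma negI_smul_cancel (x : A) (h : (-Complex.I) • x = 0) : x = 0 := by
  refine csmul_cancel (-Complex.I) ?_ x h
  simpa using Complex.I_ne_zero

private lemma pair_zero (a b : A) (h1 : a - b = 0) (h2 : a + b = 0) :
    a = 0 ∧ b = 0 := by
  have ha2 : (2 : ℂ) • a = 0 := by
    rw [two_smul]
    calc a + a = (a - b) + (a + b) := by abel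
    _ = 0 := by rw [h1, h2, add_zero]
  have ha : a = 0 := csmul_cancel 2 two_ne_zero a ha2
  refine ⟨ha, ?_⟩
  have hb := h2
  rw [ha, zero_add] at hb
  exact hb

end ModuleHelpers

section SmulHelpers

variable {A : Type*} [Ring A] [Algebra ℂ A] [StarRing A] [StarModule ℂ A]

private lemma star_negI_smul (u : A) :
    star ((-Complex.I) • u) = Complex.I • star u := by
  rw [star_smul]
  congr 1
  simp [Complex.star_def]

private lemma star_I_smul (u : A) :
    star (Complex.I • u) = (-Complex.I) • star u := by
  rw [star_smul]
  congr 1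
  simp [Complex.star_def]

private lemma dstar_smulI (C B : A) :
    dstar (Complex.I • C) B = (-Complex.I) • (star C * B + star B * C) := by
  rw [dstar, star_I_smul, smul_mul_assoc, mul_smul_comm, smul_add]
  rw [neg_smul, neg_smul, sub_eq_add_neg]

private lemma u11_smulI (P u : A) :
    u11 P ((-Complex.I) • u) = (-Complex.I) • (P * u * P + P * star u * P) := by
  rw [u11, star_negI_smul, mul_smul_comm, smul_mul_assoc, mul_smul_comm, smul_mul_assoc,
    smul_add, neg_smul, neg_smul, sub_eq_add_neg]

private lemma m12_smulI (P Q z : A) :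
    m12 P Q ((-Complex.I) • z) = (-Complex.I) • (P * z * Q + Q * star z * P) := by
  rw [m12, star_negI_smul, mul_smul_comm, smul_mul_assoc, mul_smul_comm, smul_mul_assoc,
    smul_add, neg_smul, neg_smul, sub_eq_add_neg]

end SmulHelpers

/-- In a prime unital ∗-algebra over `ℂ` with nontrivial projection `P₁`
and `P₂ = I − P₁`, a nonlinear `⋄`-derivation `Φ` with `Φ(I/2)`, `Φ(iI/2)` self-adjoint
satisfies `Φ(A₁₂ + A₂₁ + A₂₂) = Φ(A₁₂) + Φ(A₂₁) + Φ(A₂₂)`. -/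
theorem stmt7 {𝒜 : Type*} [Ring 𝒜] [Algebra ℂ 𝒜] [StarRing 𝒜] [StarModule ℂ 𝒜]
    (hprime : ∀ a b : 𝒜, (∀ x : 𝒜, a * x * b = 0) → a = 0 ∨ b = 0)
    (P₁ : 𝒜) (hP₁star : star P₁ = P₁) (hP₁idem : P₁ * P₁ = P₁)
    (hP₁ne0 : P₁ ≠ 0) (hP₁ne1 : P₁ ≠ 1)
    (Φ : 𝒜 → 𝒜)
    (hΦ : ∀ A B : 𝒜, Φ (star A * B - star B * A) =
      (star (Φ A) * B - star B * Φ A) + (star A * Φ B - star (Φ B) * A))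
    (h1 : star (Φ (((1 : ℂ)/2) • (1 : 𝒜))) = Φ (((1 : ℂ)/2) • (1 : 𝒜)))
    (h2 : star (Φ ((Complex.I/2) • (1 : 𝒜))) = Φ ((Complex.I/2) • (1 : 𝒜))) :
    ∀ A₁₂ A₂₁ A₂₂ : 𝒜, (∃ x : 𝒜, A₁₂ = P₁ * x * (1 - P₁)) →
      (∃ x : 𝒜, A₂₁ = (1 - P₁) * x * P₁) →
      (∃ x : 𝒜, A₂₂ = (1 - P₁) * x * (1 - P₁)) →
      Φ (A₁₂ + A₂₁ + A₂₂) = Φ A₁₂ + Φ A₂₁ + Φ A₂₂ := by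
  intro A₁₂ A₂₁ A₂₂ h12 h21 h22
  obtain ⟨a, rfl⟩ := h12
  obtain ⟨b, rfl⟩ := h21
  obtain ⟨c, rfl⟩ := h22
  set Q : 𝒜 := 1 - P₁ with hQdef
  set W : 𝒜 := Φ (((1 : ℂ)/2) • (1 : 𝒜)) with hW
  -- basic facts about Φ
  have hΦ' : ∀ C B : 𝒜, Φ (dstar C B) = dstar (Φ C) B + dstar C (Φ B) := by
    intro C B
    simpa only [dstar] using hΦ C B
  have hΦ0 : Φ 0 = 0 := by
    have h := hΦ 0 0
    simpa using h
  -- projection arithmetic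
  have sP : star P₁ = P₁ := hP₁star
  have sQ : star Q = Q := by rw [hQdef, star_sub, star_one, hP₁star]
  have pp : P₁ * P₁ = P₁ := hP₁idem
  have pq : P₁ * Q = 0 := by rw [hQdef, mul_sub, mul_one, hP₁idem, sub_self]
  have qp : Q * P₁ = 0 := by rw [hQdef, sub_mul, one_mul, hP₁idem, sub_self]
  have qq : Q * Q = Q := by
    rw [hQdef, sub_mul, one_mul, mul_sub, mul_one, hP₁idem, sub_self, sub_zero]
  have mpp : ∀ y : 𝒜, y * P₁ * P₁ = y * P₁ := fun y => by rw [mul_assoc, pp]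
  have mpq : ∀ y : 𝒜, y * P₁ * Q = 0 := fun y => by rw [mul_assoc, pq, mul_zero]
  have mqp : ∀ y : 𝒜, y * Q * P₁ = 0 := fun y => by rw [mul_assoc, qp, mul_zero]
  have mqq : ∀ y : 𝒜, y * Q * Q = y * Q := fun y => by rw [mul_assoc, qq]
  have hQ0 : Q ≠ 0 := by
    rw [hQdef, sub_ne_zero]
    exact fun h => hP₁ne1 h.symm
  -- skewness of the generators
  have sk11 : ∀ u : 𝒜, star (u11 P₁ u) = -(u11 P₁ u) := by
    intro u
    simp only [u11, star_sub, star_mul, star_star, sP]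
    simp only [← mul_assoc]
    abel
  have sk12 : ∀ z : 𝒜, star (m12 P₁ Q z) = -(m12 P₁ Q z) := by
    intro z
    simp only [m12, star_sub, star_mul, star_star, sP, sQ]
    simp only [← mul_assoc]
    abel
  have sk22 : ∀ w : 𝒜, star (u22 Q w) = -(u22 Q w) := by
    intro w
    simp only [u22, star_sub, star_mul, star_star, sQ]
    simp only [← mul_assoc]
    abel
  -- the hermitian-part lemma for skew elements
  have hHerm : ∀ S : 𝒜, star S = -S → star (Φ S) = (2 : ℂ) • (W * S + S * W) - Φ S := by
    intro S hS
    have e := hΦ (((1 : ℂ)/2) • (1 : 𝒜)) S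
    rw [← hW] at e
    have hAstar : star (((1 : ℂ)/2) • (1 : 𝒜)) = ((1 : ℂ)/2) • (1 : 𝒜) := by
      rw [star_smul, star_one]
      congr 1
      simp [Complex.star_def]
    rw [hAstar, hS, h1] at e
    simp only [smul_mul_assoc, mul_smul_comm, one_mul, mul_one, neg_mul,
      sub_neg_eq_add, smul_neg] at e
    have harg : ((1 : ℂ)/2) • S + ((1 : ℂ)/2) • S = S := by
      rw [← add_smul]; norm_num
    rw [harg] at e
    linear_combination (norm := module) (2 : ℂ) • e
  -- differences of Φ on sums of skew elements are skew
  have hskewD : ∀ S₁ S₂ : 𝒜, star S₁ = -S₁ → star S₂ = -S₂ →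
      star (Φ (S₁ + S₂) - Φ S₁ - Φ S₂) = -(Φ (S₁ + S₂) - Φ S₁ - Φ S₂) := by
    intro S₁ S₂ hs1 hs2
    have hs3 : star (S₁ + S₂) = -(S₁ + S₂) := by rw [star_add, hs1, hs2, neg_add]
    rw [star_sub, star_sub, hHerm _ hs1, hHerm _ hs2, hHerm _ hs3]
    simp only [mul_add, add_mul, smul_add]
    module
  -- D-localization : for U ∈ A₁₁ skew, R mixed skew, the difference is in A₁₁
  have hDloc : ∀ u z : 𝒜,
      Q * (Φ (u11 P₁ u + m12 P₁ Q z) - Φ (u11 P₁ u) - Φ (m12 P₁ Q z)) = 0 ∧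
      (Φ (u11 P₁ u + m12 P₁ Q z) - Φ (u11 P₁ u) - Φ (m12 P₁ Q z)) * Q = 0 := by
    intro u z
    set T : 𝒜 := Φ (u11 P₁ u + m12 P₁ Q z) - Φ (u11 P₁ u) - Φ (m12 P₁ Q z) with hT
    have hTskew : star T = -T := hskewD _ _ (sk11 u) (sk12 z)
    have c0l : Q * u11 P₁ u = 0 := by
      simp only [u11, mul_sub, ← mul_assoc, qp, zero_mul, sub_self]
    have c0r : u11 P₁ u * Q = 0 := by
      simp only [u11, sub_mul, mpq, sub_self]
    have c1 : dstar Q (u11 P₁ u) = 0 := by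
      rw [dstar, sQ, c0l, sk11, neg_mul, c0r, neg_zero, sub_zero]
    have c2 : dstar (Complex.I • Q) (u11 P₁ u) = 0 := by
      rw [dstar_smulI, sQ, c0l, sk11, neg_mul, c0r, neg_zero, add_zero, smul_zero]
    have e1 : dstar Q T = 0 := by
      have h := star2 Φ hΦ' Q (u11 P₁ u) (m12 P₁ Q z)
      rw [← hT, dstar_add_right, c1, zero_add, hΦ0, sub_zero, sub_self] at h
      exact h
    have e2 : dstar (Complex.I • Q) T = 0 := by
      have h := star2 Φ hΦ' (Complex.I • Q) (u11 P₁ u) (m12 P₁ Q z)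
      rw [← hT, dstar_add_right, c2, zero_add, hΦ0, sub_zero, sub_self] at h
      exact h
    rw [dstar, sQ] at e1
    rw [dstar_smulI, sQ] at e2
    have e2' : Q * T + star T * Q = 0 := negI_smul_cancel _ e2
    obtain ⟨hq1, hq2⟩ := pair_zero (Q * T) (star T * Q) e1 e2'
    refine ⟨hq1, ?_⟩
    rw [hTskew, neg_mul, neg_eq_zero] at hq2
    exact hq2
  -- E-localization : for R mixed skew, V ∈ A₂₂ skew, the difference is in A₂₂
  have hEloc : ∀ z w : 𝒜,
      P₁ * (Φ (m12 P₁ Q z + u22 Q w) - Φ (m12 P₁ Q z) - Φ (u22 Q w)) = 0 ∧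
      (Φ (m12 P₁ Q z + u22 Q w) - Φ (m12 P₁ Q z) - Φ (u22 Q w)) * P₁ = 0 := by
    intro z w
    set T : 𝒜 := Φ (m12 P₁ Q z + u22 Q w) - Φ (m12 P₁ Q z) - Φ (u22 Q w) with hT
    have hTskew : star T = -T := hskewD _ _ (sk12 z) (sk22 w)
    have c0l : P₁ * u22 Q w = 0 := by
      simp only [u22, mul_sub, ← mul_assoc, pq, zero_mul, sub_self]
    have c0r : u22 Q w * P₁ = 0 := by
      simp only [u22, sub_mul, mqp, sub_self]
    have c1 : dstar P₁ (u22 Q w) = 0 := by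
      rw [dstar, sP, c0l, sk22, neg_mul, c0r, neg_zero, sub_zero]
    have c2 : dstar (Complex.I • P₁) (u22 Q w) = 0 := by
      rw [dstar_smulI, sP, c0l, sk22, neg_mul, c0r, neg_zero, add_zero, smul_zero]
    have e1 : dstar P₁ T = 0 := by
      have h := star2 Φ hΦ' P₁ (m12 P₁ Q z) (u22 Q w)
      rw [← hT, dstar_add_right, c1, add_zero, hΦ0, sub_zero, sub_self] at h
      exact h
    have e2 : dstar (Complex.I • P₁) T = 0 := by
      have h := star2 Φ hΦ' (Complex.I • P₁) (m12 P₁ Q z) (u22 Q w)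
      rw [← hT, dstar_add_right, c2, add_zero, hΦ0, sub_zero, sub_self] at h
      exact h
    rw [dstar, sP] at e1
    rw [dstar_smulI, sP] at e2
    have e2' : P₁ * T + star T * P₁ = 0 := negI_smul_cancel _ e2
    obtain ⟨hq1, hq2⟩ := pair_zero (P₁ * T) (star T * P₁) e1 e2'
    refine ⟨hq1, ?_⟩
    rw [hTskew, neg_mul, neg_eq_zero] at hq2
    exact hq2
  -- E-full : for R mixed skew, V ∈ A₂₂ skew, the difference vanishes
  have hEfull : ∀ z w : 𝒜,
      Φ (m12 P₁ Q z + u22 Q w) - Φ (m12 P₁ Q z) - Φ (u22 Q w) = 0 := by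
    intro z w
    set T : 𝒜 := Φ (m12 P₁ Q z + u22 Q w) - Φ (m12 P₁ Q z) - Φ (u22 Q w) with hT
    have hTskew : star T = -T := hskewD _ _ (sk12 z) (sk22 w)
    obtain ⟨hPT, hTP⟩ := hEloc z w
    rw [← hT] at hPT hTP
    have hQT : Q * T = T := by
      rw [hQdef, sub_mul, one_mul, hPT, sub_zero]
    have hTQ : T * Q = T := by
      rw [hQdef, mul_sub, mul_one, hTP, sub_zero]
    have hzero : ∀ x : 𝒜, T * x * P₁ = 0 := by
      intro x
      have d1 : dstar (Q * x * P₁) (m12 P₁ Q z) = u11 P₁ (z * (Q * x)) := by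
        simp only [dstar, m12, u11, star_sub, star_mul, star_star, sP, sQ,
          mul_sub, sub_mul]
        simp only [← mul_assoc]
        simp only [mpp, mpq, mqp, mqq, pp, pq, qp, qq, zero_mul, mul_zero,
          sub_zero, zero_sub, neg_neg, neg_zero]
        abel
      have d2 : dstar (Q * x * P₁) (u22 Q w) =
          m12 P₁ Q (star x * (Q * w) - star x * (Q * star w)) := by
        simp only [dstar, m12, u22, star_sub, star_mul, star_star, sP, sQ,
          mul_sub, sub_mul]
        simp only [← mul_assoc]
        simp only [mpp, mpq, mqp, mqq, pp, pq, qp, qq, zero_mul, mul_zero,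
          sub_zero, zero_sub, neg_neg, neg_zero]
      have s2 := star2 Φ hΦ' (Q * x * P₁) (m12 P₁ Q z) (u22 Q w)
      rw [← hT, dstar_add_right, d1, d2] at s2
      have hQd := (hDloc (z * (Q * x)) (star x * (Q * w) - star x * (Q * star w))).1
      have hq0 : Q * dstar (Q * x * P₁) T = 0 := by rw [s2]; exact hQd
      have key : Q * dstar (Q * x * P₁) T * P₁ = T * x * P₁ := by
        rw [dstar, hTskew]
        simp only [star_mul, star_star, sP, sQ, mul_sub, sub_mul, neg_mul, mul_neg,
          sub_neg_eq_add]
        simp only [← mul_assoc]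
        simp only [hQT, hTQ]
        simp only [mul_add, add_mul]
        simp only [← mul_assoc]
        simp only [qp, hQT, mpp, zero_mul, zero_add]
      rw [← key, hq0, zero_mul]
    rcases hprime T P₁ hzero with h | h
    · exact h
    · exact absurd h hP₁ne0
  -- D-full : for U ∈ A₁₁ skew, R mixed skew, the difference vanishes
  have hDfull : ∀ u z : 𝒜,
      Φ (u11 P₁ u + m12 P₁ Q z) - Φ (u11 P₁ u) - Φ (m12 P₁ Q z) = 0 := by
    intro u z
    set T : 𝒜 := Φ (u11 P₁ u + m12 P₁ Q z) - Φ (u11 P₁ u) - Φ (m12 P₁ Q z) with hT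
    have hTskew : star T = -T := hskewD _ _ (sk11 u) (sk12 z)
    obtain ⟨hQT0, hTQ0⟩ := hDloc u z
    rw [← hT] at hQT0 hTQ0
    have hP' : P₁ = 1 - Q := by rw [hQdef]; abel
    have hPT : P₁ * T = T := by
      rw [hP', sub_mul, one_mul, hQT0, sub_zero]
    have hTP : T * P₁ = T := by
      rw [hP', mul_sub, mul_one, hTQ0, sub_zero]
    have hzero : ∀ x : 𝒜, T * x * Q = 0 := by
      intro x
      have d1 : dstar (P₁ * x * Q) (u11 P₁ u) =
          m12 P₁ Q (u * (P₁ * x) - star u * (P₁ * x)) := by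
        simp only [dstar, m12, u11, star_sub, star_mul, star_star, sP, sQ,
          mul_sub, sub_mul]
        simp only [← mul_assoc]
        simp only [mpp, mpq, mqp, mqq, pp, pq, qp, qq, zero_mul, mul_zero,
          sub_zero, zero_sub, neg_neg, neg_zero]
        abel
      have d2 : dstar (P₁ * x * Q) (m12 P₁ Q z) = u22 Q (star x * (P₁ * z)) := by
        simp only [dstar, m12, u22, star_sub, star_mul, star_star, sP, sQ,
          mul_sub, sub_mul]
        simp only [← mul_assoc]
        simp only [mpp, mpq, mqp, mqq, pp, pq, qp, qq, zero_mul, mul_zero,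
          sub_zero, zero_sub, neg_neg, neg_zero]
      have s2 := star2 Φ hΦ' (P₁ * x * Q) (u11 P₁ u) (m12 P₁ Q z)
      rw [← hT, dstar_add_right, d1, d2] at s2
      have hEd := hEfull (u * (P₁ * x) - star u * (P₁ * x)) (star x * (P₁ * z))
      have hq0 : dstar (P₁ * x * Q) T = 0 := by rw [s2]; exact hEd
      have key : P₁ * dstar (P₁ * x * Q) T * Q = T * x * Q := by
        rw [dstar, hTskew]
        simp only [star_mul, star_star, sP, sQ, mul_sub, sub_mul, neg_mul, mul_neg,
          sub_neg_eq_add]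
        simp only [← mul_assoc]
        simp only [hPT, hTP]
        simp only [mul_add, add_mul]
        simp only [← mul_assoc]
        simp only [pq, hPT, mqq, zero_mul, zero_add]
      rw [← key, hq0, mul_zero, zero_mul]
    rcases hprime T Q hzero with h | h
    · exact h
    · exact absurd h hQ0
  -- main computation
  set M : 𝒜 := P₁ * a * Q + Q * b * P₁ + Q * c * Q with hM
  set T : 𝒜 := Φ M - Φ (P₁ * a * Q) - Φ (Q * b * P₁) - Φ (Q * c * Q) with hT
  -- zero products
  have za1 : P₁ * (Q * b * P₁) = 0 := by
    simp only [← mul_assoc, pq, zero_mul]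
  have za2 : star (Q * b * P₁) * P₁ = 0 := by
    simp only [star_mul, star_star, sP, sQ, ← mul_assoc, mpp, mqp, zero_mul]
  have zb1 : P₁ * (Q * c * Q) = 0 := by
    simp only [← mul_assoc, pq, zero_mul]
  have zb2 : star (Q * c * Q) * P₁ = 0 := by
    simp only [star_mul, star_star, sQ, ← mul_assoc, mqp, zero_mul]
  have n1 : dstar P₁ (Q * b * P₁) = 0 := by
    rw [dstar, sP, za1, za2, sub_zero]
  have n2 : dstar P₁ (Q * c * Q) = 0 := by
    rw [dstar, sP, zb1, zb2, sub_zero]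
  have n3 : dstar (Complex.I • P₁) (Q * b * P₁) = 0 := by
    rw [dstar_smulI, sP, za1, za2, add_zero, smul_zero]
  have n4 : dstar (Complex.I • P₁) (Q * c * Q) = 0 := by
    rw [dstar_smulI, sP, zb1, zb2, add_zero, smul_zero]
  have e1 : dstar P₁ T = 0 := by
    have h := star3 Φ hΦ' P₁ (P₁ * a * Q) (Q * b * P₁) (Q * c * Q)
    rw [← hM, ← hT, dstar_add_right, dstar_add_right, n1, n2, add_zero, add_zero,
      hΦ0, sub_zero, sub_zero, sub_self] at h
    exact h
  have e2 : dstar (Complex.I • P₁) T = 0 := by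
    have h := star3 Φ hΦ' (Complex.I • P₁) (P₁ * a * Q) (Q * b * P₁) (Q * c * Q)
    rw [← hM, ← hT, dstar_add_right, dstar_add_right, n3, n4, add_zero, add_zero,
      hΦ0, sub_zero, sub_zero, sub_self] at h
    exact h
  rw [dstar, sP] at e1
  rw [dstar_smulI, sP] at e2
  have e2' : P₁ * T + star T * P₁ = 0 := negI_smul_cancel _ e2
  obtain ⟨hPT, _⟩ := pair_zero (P₁ * T) (star T * P₁) e1 e2'
  -- now the Q-side, using hDfull
  have hstarTQ : star T * Q = 0 := by
    have hzero : ∀ x : 𝒜, star T * Q * x * P₁ = 0 := by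
      intro x
      have q1 : dstar (Q * x * P₁) (P₁ * a * Q) = 0 := by
        rw [dstar]
        simp only [star_mul, star_star, sP, sQ]
        simp only [← mul_assoc]
        simp only [mpp, mpq, mqp, mqq, pp, pq, qp, qq, zero_mul, mul_zero, sub_zero]
      have q2 : dstar (Q * x * P₁) (Q * b * P₁) = u11 P₁ (star x * (Q * b)) := by
        simp only [dstar, u11, star_mul, star_star, sP, sQ]
        simp only [← mul_assoc]
        simp only [mpp, mpq, mqp, mqq, pp, pq, qp, qq, zero_mul, mul_zero, sub_zero]
      have q3 : dstar (Q * x * P₁) (Q * c * Q) = m12 P₁ Q (star x * (Q * c)) := by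
        simp only [dstar, m12, star_mul, star_star, sP, sQ]
        simp only [← mul_assoc]
        simp only [mpp, mpq, mqp, mqq, pp, pq, qp, qq, zero_mul, mul_zero, sub_zero]
      have q2' : star (Q * x * P₁) * (Q * b * P₁) + star (Q * b * P₁) * (Q * x * P₁)
          = P₁ * (star x * (Q * b)) * P₁ + P₁ * star (star x * (Q * b)) * P₁ := by
        simp only [star_mul, star_star, sP, sQ]
        simp only [← mul_assoc]
        simp only [mpp, mpq, mqp, mqq, pp, pq, qp, qq, zero_mul, mul_zero]
      have q3' : star (Q * x * P₁) * (Q * c * Q) + star (Q * c * Q) * (Q * x * P₁)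
          = P₁ * (star x * (Q * c)) * Q + Q * star (star x * (Q * c)) * P₁ := by
        simp only [star_mul, star_star, sP, sQ]
        simp only [← mul_assoc]
        simp only [mpp, mpq, mqp, mqq, pp, pq, qp, qq, zero_mul, mul_zero]
      have q4 : dstar (Complex.I • (Q * x * P₁)) (P₁ * a * Q) = 0 := by
        rw [dstar_smulI]
        have hz1 : star (Q * x * P₁) * (P₁ * a * Q) = 0 := by
          simp only [star_mul, star_star, sP, sQ]
          simp only [← mul_assoc]
          simp only [mpp, mpq, mqp, mqq, pp, pq, qp, qq, zero_mul, mul_zero]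
        have hz2 : star (P₁ * a * Q) * (Q * x * P₁) = 0 := by
          simp only [star_mul, star_star, sP, sQ]
          simp only [← mul_assoc]
          simp only [mpp, mpq, mqp, mqq, pp, pq, qp, qq, zero_mul, mul_zero]
        rw [hz1, hz2, add_zero, smul_zero]
      have q5 : dstar (Complex.I • (Q * x * P₁)) (Q * b * P₁)
          = u11 P₁ ((-Complex.I) • (star x * (Q * b))) := by
        rw [dstar_smulI, q2', u11_smulI]
      have q6 : dstar (Complex.I • (Q * x * P₁)) (Q * c * Q)
          = m12 P₁ Q ((-Complex.I) • (star x * (Q * c))) := by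
        rw [dstar_smulI, q3', m12_smulI]
      have s3 := star3 Φ hΦ' (Q * x * P₁) (P₁ * a * Q) (Q * b * P₁) (Q * c * Q)
      rw [← hM, ← hT, dstar_add_right, dstar_add_right, q1, q2, q3, zero_add,
        hΦ0, sub_zero] at s3
      have f1 : dstar (Q * x * P₁) T = 0 := by
        rw [s3]; exact hDfull (star x * (Q * b)) (star x * (Q * c))
      have s3' := star3 Φ hΦ' (Complex.I • (Q * x * P₁)) (P₁ * a * Q) (Q * b * P₁)
        (Q * c * Q)
      rw [← hM, ← hT, dstar_add_right, dstar_add_right, q4, q5, q6, zero_add,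
        hΦ0, sub_zero] at s3'
      have f2 : dstar (Complex.I • (Q * x * P₁)) T = 0 := by
        rw [s3']
        exact hDfull ((-Complex.I) • (star x * (Q * b))) ((-Complex.I) • (star x * (Q * c)))
      rw [dstar] at f1
      rw [dstar_smulI] at f2
      have f2' : star (Q * x * P₁) * T + star T * (Q * x * P₁) = 0 :=
        negI_smul_cancel _ f2
      obtain ⟨_, hg⟩ := pair_zero (star (Q * x * P₁) * T) (star T * (Q * x * P₁)) f1 f2'
      calc star T * Q * x * P₁ = star T * (Q * x * P₁) := by
            simp only [mul_assoc]
      _ = 0 := hg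
    rcases hprime (star T * Q) P₁ hzero with h | h
    · exact h
    · exact absurd h hP₁ne0
  have hQT : Q * T = 0 := by
    have h := congrArg star hstarTQ
    rwa [star_mul, star_star, sQ, star_zero] at h
  have hT0 : T = 0 := by
    have hsum : P₁ + Q = 1 := by rw [hQdef]; abel
    calc T = (P₁ + Q) * T := by rw [hsum, one_mul]
    _ = P₁ * T + Q * T := by rw [add_mul]
    _ = 0 := by rw [hPT, hQT, add_zero]
  have hfinal : Φ M - Φ (P₁ * a * Q) - Φ (Q * b * P₁) - Φ (Q * c * Q) = 0 := by
    rw [← hT]; exact hT0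
  rw [← sub_eq_zero]
  calc Φ M - (Φ (P₁ * a * Q) + Φ (Q * b * P₁) + Φ (Q * c * Q))
      = Φ M - Φ (P₁ * a * Q) - Φ (Q * b * P₁) - Φ (Q * c * Q) := by abel
  _ = 0 := hfinal
end

section
/- Let 𝒜 be a prime unital ∗-algebra over ℂ containing a nontrivial projection P₁, let P₂ = I − P₁, and let Φ : 𝒜 → 𝒜 be a nonlinear ⋄-derivation such that Φ(I/2) and Φ(iI/2) are self-adjoint. Then for each i ∈ {1, 2} and all A_{ii}, B_{ii} ∈ 𝒜_{ii} one has Φ(A_{ii} + B_{ii}) = Φ(A_{ii}) + Φ(B_{ii}). -/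
section Helpers

variable {A : Type*} [Ring A] [Algebra ℂ A] [StarRing A] [StarModule ℂ A]
variable {Φ : A → A}

private lemma phi_zero
    (hΦ : ∀ X Y : A, Φ (star X * Y - star Y * X) =
      (star (Φ X) * Y - star Y * Φ X) + (star X * Φ Y - star (Φ Y) * X)) :
    Φ 0 = 0 := by
  have h := hΦ 0 0
  simpa using h

private lemma core
    (hΦ : ∀ X Y : A, Φ (star X * Y - star Y * X) =
      (star (Φ X) * Y - star Y * Φ X) + (star X * Φ Y - star (Φ Y) * X))
    (W M N : A)
    (hs : Φ (star W * (M + N) - star (M + N) * W) =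
      Φ (star W * M - star M * W) + Φ (star W * N - star N * W)) :
    star W * (Φ (M + N) - Φ M - Φ N) - star (Φ (M + N) - Φ M - Φ N) * W = 0 := by
  have ha := hΦ W (M + N)
  have hb := hΦ W M
  have hc := hΦ W N
  have hY : (star (Φ W) * (M + N) - star (M + N) * Φ W) +
        (star W * Φ (M + N) - star (Φ (M + N)) * W)
      = ((star (Φ W) * M - star M * Φ W) + (star W * Φ M - star (Φ M) * W))
        + ((star (Φ W) * N - star N * Φ W) + (star W * Φ N - star (Φ N) * W)) := by
    rw [← ha, ← hb, ← hc]; exact hs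
  have key : star W * (Φ (M + N) - Φ M - Φ N) - star (Φ (M + N) - Φ M - Φ N) * W
      = ((star (Φ W) * (M + N) - star (M + N) * Φ W) +
          (star W * Φ (M + N) - star (Φ (M + N)) * W))
        - (((star (Φ W) * M - star M * Φ W) + (star W * Φ M - star (Φ M) * W))
          + ((star (Φ W) * N - star N * Φ W) + (star W * Φ N - star (Φ N) * W))) := by
    simp only [star_sub, star_add]
    noncomm_ring
  rw [key, hY, sub_self]

private lemma zero_split (h0 : Φ 0 = 0) (W M N : A)
    (h1 : star W * N = 0) (h2 : star N * W = 0) :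
    Φ (star W * (M + N) - star (M + N) * W) =
      Φ (star W * M - star M * W) + Φ (star W * N - star N * W) := by
  have e : star W * (M + N) - star (M + N) * W = star W * M - star M * W := by
    rw [mul_add, star_add, add_mul, h1, h2]; abel
  rw [e, h1, h2]
  simp [h0]

private lemma combine (W T : A)
    (c1 : star W * T - star T * W = 0)
    (c2 : star ((Complex.I : ℂ) • W) * T - star T * ((Complex.I : ℂ) • W) = 0) :
    star W * T = 0 ∧ star T * W = 0 := by
  have hb : star T * W = star W * T := (sub_eq_zero.mp c1).symm
  rw [star_smul, smul_mul_assoc, mul_smul_comm, hb, Complex.star_def, Complex.conj_I,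
    neg_smul] at c2
  have h4 : ((2:ℂ) * Complex.I) • (star W * T) = 0 := by
    rw [mul_smul, two_smul]
    have e : -(Complex.I • (star W * T)) - Complex.I • (star W * T)
        = -(Complex.I • (star W * T) + Complex.I • (star W * T)) := by abel
    rw [e] at c2
    exact neg_eq_zero.mp c2
  have hc : (2:ℂ) * Complex.I ≠ 0 := by simp [Complex.I_ne_zero]
  have h5 := congrArg (fun y => ((2:ℂ) * Complex.I)⁻¹ • y) h4
  simp only [inv_smul_smul₀ hc, smul_zero] at h5
  exact ⟨h5, by rw [hb, h5]⟩

private lemma kill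
    (h0 : Φ 0 = 0)
    (hΦ : ∀ X Y : A, Φ (star X * Y - star Y * X) =
      (star (Φ X) * Y - star Y * Φ X) + (star X * Φ Y - star (Φ Y) * X))
    (W M N : A) (h1 : star W * N = 0) (h2 : star N * W = 0) :
    star W * (Φ (M + N) - Φ M - Φ N) = 0 ∧ star (Φ (M + N) - Φ M - Φ N) * W = 0 := by
  have c1 := core hΦ W M N (zero_split h0 W M N h1 h2)
  have h1' : star ((Complex.I : ℂ) • W) * N = 0 := by
    rw [star_smul, smul_mul_assoc, h1, smul_zero]
  have h2' : star N * ((Complex.I : ℂ) • W) = 0 := by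
    rw [mul_smul_comm, h2, smul_zero]
  have c2 := core hΦ ((Complex.I : ℂ) • W) M N (zero_split h0 _ M N h1' h2')
  exact combine W _ c1 c2

end Helpers

section L2
set_option linter.unusedSectionVars false

variable {A : Type*} [Ring A] [Algebra ℂ A] [StarRing A] [StarModule ℂ A]
variable {Φ : A → A}

private lemma lem2
    (h0 : Φ 0 = 0)
    (hΦ : ∀ X Y : A, Φ (star X * Y - star Y * X) =
      (star (Φ X) * Y - star Y * Φ X) + (star X * Φ Y - star (Φ Y) * X))
    (E F : A) (hE : star E = E) (hF : star F = F) (hEF : E + F = 1)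
    (hEF0 : E * F = 0) (hFE0 : F * E = 0)
    (M N : A) (hM1 : E * M = M) (hN1 : F * N = N) :
    Φ (M + N) = Φ M + Φ N := by
  have hEN : E * N = 0 := by rw [← hN1, ← mul_assoc, hEF0, zero_mul]
  have hFM : F * M = 0 := by rw [← hM1, ← mul_assoc, hFE0, zero_mul]
  have hNE : star N * E = 0 := by
    have := congrArg star hEN; rwa [star_mul, hE, star_zero] at this
  have hMF : star M * F = 0 := by
    have := congrArg star hFM; rwa [star_mul, hF, star_zero] at this
  have k1 := kill h0 hΦ E M N (by rw [hE]; exact hEN) hNE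
  have k2 := kill h0 hΦ F N M (by rw [hF]; exact hFM) hMF
  have e1 : E * (Φ (M + N) - Φ M - Φ N) = 0 := by rw [← hE]; exact k1.1
  have e2 : F * (Φ (M + N) - Φ M - Φ N) = 0 := by
    have h := k2.1
    rw [add_comm N M] at h
    rw [← hF]
    have e : Φ (M + N) - Φ M - Φ N = Φ (M + N) - Φ N - Φ M := by abel
    rw [e]; exact h
  have h3 : (1 : A) * (Φ (M + N) - Φ M - Φ N) = 0 := by
    rw [← hEF, add_mul, e1, e2, add_zero]
  rw [one_mul, sub_sub, sub_eq_zero] at h3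
  exact h3

end L2

section Add12
set_option linter.unusedSectionVars false

variable {A : Type*} [Ring A] [Algebra ℂ A] [StarRing A] [StarModule ℂ A]
variable {Φ : A → A}

private lemma add12
    (h0 : Φ 0 = 0)
    (hΦ : ∀ X Y : A, Φ (star X * Y - star Y * X) =
      (star (Φ X) * Y - star Y * Φ X) + (star X * Φ Y - star (Φ Y) * X))
    (hprime : ∀ a b : A, (∀ x : A, a * x * b = 0) → a = 0 ∨ b = 0)
    (E F : A) (hE : star E = E) (hF : star F = F) (hEF : E + F = 1)
    (hEF0 : E * F = 0) (hFE0 : F * E = 0) (hE0 : E ≠ 0) (hF0 : F ≠ 0)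
    (M M' : A) (hM1 : E * M = M) (hM2 : M * F = M)
    (hM'1 : E * M' = M') (hM'2 : M' * F = M') :
    Φ (M + M') = Φ M + Φ M' := by
  -- corner facts
  have hFM : F * M = 0 := by rw [← hM1, ← mul_assoc, hFE0, zero_mul]
  have hFM' : F * M' = 0 := by rw [← hM'1, ← mul_assoc, hFE0, zero_mul]
  have hME : M * E = 0 := by rw [← hM2, mul_assoc, hFE0, mul_zero]
  have hM'E : M' * E = 0 := by rw [← hM'2, mul_assoc, hFE0, mul_zero]
  have hsM'F : star M' * F = 0 := by
    have := congrArg star hFM'; rwa [star_mul, hF, star_zero] at this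
  have hEsM : E * star M = 0 := by
    have := congrArg star hME; rwa [star_mul, hE, star_zero] at this
  have hEsM' : E * star M' = 0 := by
    have := congrArg star hM'E; rwa [star_mul, hE, star_zero] at this
  have hFsM : F * star M = star M := by
    have := congrArg star hM2; rwa [star_mul, hF] at this
  have hFsM' : F * star M' = star M' := by
    have := congrArg star hM'2; rwa [star_mul, hF] at this
  -- (a) F * T = 0
  have hFT : F * (Φ (M + M') - Φ M - Φ M') = 0 := by
    refine (hprime E (F * (Φ (M + M') - Φ M - Φ M')) (fun x => ?_)).resolve_left hE0
    have hsW : star (F * star x * E) = E * (x * F) := by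
      rw [star_mul, star_mul, star_star, hE, hF]
    have k := (kill h0 hΦ (F * star x * E) M M'
      (by rw [hsW, mul_assoc, mul_assoc, hFM', mul_zero, mul_zero])
      (by rw [← mul_assoc, ← mul_assoc, hsM'F, zero_mul, zero_mul])).1
    rw [hsW] at k
    calc E * x * (F * (Φ (M + M') - Φ M - Φ M'))
        = E * (x * F) * (Φ (M + M') - Φ M - Φ M') := by rw [mul_assoc, mul_assoc, mul_assoc]
      _ = 0 := k
  -- (b) E * T' = 0
  have hET' : E * (Φ (-star M + -star M') - Φ (-star M) - Φ (-star M')) = 0 := by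
    refine (hprime F (E * (Φ (-star M + -star M') - Φ (-star M) - Φ (-star M')))
      (fun x => ?_)).resolve_left hF0
    have hsW : star (E * star x * F) = F * (x * E) := by
      rw [star_mul, star_mul, star_star, hE, hF]
    have k := (kill h0 hΦ (E * star x * F) (-star M) (-star M')
      (by rw [hsW, mul_neg, mul_assoc, mul_assoc, hEsM', mul_zero, mul_zero, neg_zero])
      (by rw [star_neg, star_star, neg_mul, ← mul_assoc, ← mul_assoc, hM'E, zero_mul,
        zero_mul, neg_zero])).1
    rw [hsW] at k
    calc F * x * (E * (Φ (-star M + -star M') - Φ (-star M) - Φ (-star M')))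
        = F * (x * E) * (Φ (-star M + -star M') - Φ (-star M) - Φ (-star M')) := by
          rw [mul_assoc, mul_assoc, mul_assoc]
      _ = 0 := k
  -- (c) T + T' = 0 : the I-probe trick
  have l1 : Φ (M + -star M') = Φ M + Φ (-star M') :=
    lem2 h0 hΦ E F hE hF hEF hEF0 hFE0 M (-star M') hM1 (by rw [mul_neg, hFsM'])
  have l2 : Φ ((M + M') + (-star M + -star M')) = Φ (M + M') + Φ (-star M + -star M') :=
    lem2 h0 hΦ E F hE hF hEF hEF0 hFE0 (M + M') (-star M + -star M')
      (by rw [mul_add, hM1, hM'1]) (by rw [mul_add, mul_neg, mul_neg, hFsM, hFsM'])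
  have l3 : Φ (M + -star M) = Φ M + Φ (-star M) :=
    lem2 h0 hΦ E F hE hF hEF hEF0 hFE0 M (-star M) hM1 (by rw [mul_neg, hFsM])
  have l4 : Φ (M' + -star M') = Φ M' + Φ (-star M') :=
    lem2 h0 hΦ E F hE hF hEF hEF0 hFE0 M' (-star M') hM'1 (by rw [mul_neg, hFsM'])
  have ha := hΦ 1 (M + -star M')
  have hb := hΦ 1 M
  have hc := hΦ 1 (-star M')
  simp only [star_one, one_mul, mul_one] at ha hb hc
  have ea : M + -star M' - star (M + -star M') = (M + M') + (-star M + -star M') := by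
    rw [star_add, star_neg, star_star]; abel
  rw [ea, l2, l1] at ha
  have eb : M - star M = M + -star M := sub_eq_add_neg M (star M)
  rw [eb, l3] at hb
  have ec : -star M' - star (-star M') = M' + -star M' := by
    rw [star_neg, star_star]; abel
  rw [ec, l4] at hc
  have keyc : (Φ (M + M') - Φ M - Φ M') +
        (Φ (-star M + -star M') - Φ (-star M) - Φ (-star M'))
      = (Φ (M + M') + Φ (-star M + -star M')) - (Φ M + Φ (-star M))
        - (Φ M' + Φ (-star M')) := by abel
  have tplus : (Φ (M + M') - Φ M - Φ M') +
      (Φ (-star M + -star M') - Φ (-star M) - Φ (-star M')) = 0 := by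
    rw [keyc, ha, hb, hc]
    simp only [star_add, star_neg, star_star, mul_add, add_mul, mul_neg, neg_mul]
    abel
  -- (d) conclude
  have hET : E * (Φ (M + M') - Φ M - Φ M') = 0 := by
    have h := congrArg (fun y => E * y) tplus
    simp only [mul_add, mul_zero] at h
    rw [hET', add_zero] at h
    exact h
  have h3 : (1 : A) * (Φ (M + M') - Φ M - Φ M') = 0 := by
    rw [← hEF, add_mul, hET, hFT, add_zero]
  rw [one_mul, sub_sub, sub_eq_zero] at h3
  exact h3

end Add12

section Diag
set_option linter.unusedSectionVars false

variable {A : Type*} [Ring A] [Algebra ℂ A] [StarRing A] [StarModule ℂ A]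
variable {Φ : A → A}

private lemma split_diag
    (h0 : Φ 0 = 0)
    (hΦ : ∀ X Y : A, Φ (star X * Y - star Y * X) =
      (star (Φ X) * Y - star Y * Φ X) + (star X * Φ Y - star (Φ Y) * X))
    (hprime : ∀ a b : A, (∀ x : A, a * x * b = 0) → a = 0 ∨ b = 0)
    (E F : A) (hE : star E = E) (hF : star F = F) (hEF : E + F = 1)
    (hEF0 : E * F = 0) (hFE0 : F * E = 0) (hE0 : E ≠ 0) (hF0 : F ≠ 0)
    (C A₁ B₁ : A) (hC1 : E * C = C) (hC2 : C * F = C)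
    (hA1 : E * A₁ = A₁) (hA2 : A₁ * E = A₁) (hB1 : E * B₁ = B₁) (hB2 : B₁ * E = B₁) :
    Φ (star C * (A₁ + B₁) - star (A₁ + B₁) * C) =
      Φ (star C * A₁ - star A₁ * C) + Φ (star C * B₁ - star B₁ * C) := by
  have hFE' : F + E = 1 := by rw [add_comm]; exact hEF
  -- star facts
  have hFsC : F * star C = star C := by
    have := congrArg star hC2; rwa [star_mul, hF] at this
  have hsCE : star C * E = star C := by
    have := congrArg star hC1; rwa [star_mul, hE] at this
  have hEsA : E * star A₁ = star A₁ := by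
    have := congrArg star hA2; rwa [star_mul, hE] at this
  have hEsB : E * star B₁ = star B₁ := by
    have := congrArg star hB2; rwa [star_mul, hE] at this
  have hsAE : star A₁ * E = star A₁ := by
    have := congrArg star hA1; rwa [star_mul, hE] at this
  have hsBE : star B₁ * E = star B₁ := by
    have := congrArg star hB1; rwa [star_mul, hE] at this
  -- memberships
  have m1 : E * -(star A₁ * C) = -(star A₁ * C) := by
    rw [mul_neg, ← mul_assoc, hEsA]
  have m1' : -(star A₁ * C) * F = -(star A₁ * C) := by
    rw [neg_mul, mul_assoc, hC2]
  have m2 : E * -(star B₁ * C) = -(star B₁ * C) := by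
    rw [mul_neg, ← mul_assoc, hEsB]
  have m2' : -(star B₁ * C) * F = -(star B₁ * C) := by
    rw [neg_mul, mul_assoc, hC2]
  have n1 : F * (star C * A₁) = star C * A₁ := by rw [← mul_assoc, hFsC]
  have n1' : star C * A₁ * E = star C * A₁ := by rw [mul_assoc, hA2]
  have n2 : F * (star C * B₁) = star C * B₁ := by rw [← mul_assoc, hFsC]
  have n2' : star C * B₁ * E = star C * B₁ := by rw [mul_assoc, hB2]
  have e0 : star C * (A₁ + B₁) - star (A₁ + B₁) * C
      = (-(star A₁ * C) + -(star B₁ * C)) + (star C * A₁ + star C * B₁) := by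
    rw [mul_add, star_add, add_mul]; abel
  have L2 : Φ ((-(star A₁ * C) + -(star B₁ * C)) + (star C * A₁ + star C * B₁))
      = Φ (-(star A₁ * C) + -(star B₁ * C)) + Φ (star C * A₁ + star C * B₁) :=
    lem2 h0 hΦ E F hE hF hEF hEF0 hFE0 _ _
      (by rw [mul_add, m1, m2]) (by rw [mul_add, n1, n2])
  have A12 : Φ (-(star A₁ * C) + -(star B₁ * C))
      = Φ (-(star A₁ * C)) + Φ (-(star B₁ * C)) :=
    add12 h0 hΦ hprime E F hE hF hEF hEF0 hFE0 hE0 hF0 _ _ m1 m1' m2 m2'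
  have A21 : Φ (star C * A₁ + star C * B₁) = Φ (star C * A₁) + Φ (star C * B₁) :=
    add12 h0 hΦ hprime F E hF hE hFE' hFE0 hEF0 hF0 hE0 _ _ n1 n1' n2 n2'
  have r1 : Φ (star C * A₁ - star A₁ * C) = Φ (-(star A₁ * C)) + Φ (star C * A₁) := by
    have e : star C * A₁ - star A₁ * C = -(star A₁ * C) + star C * A₁ := by abel
    rw [e]
    exact lem2 h0 hΦ E F hE hF hEF hEF0 hFE0 _ _ m1 n1
  have r2 : Φ (star C * B₁ - star B₁ * C) = Φ (-(star B₁ * C)) + Φ (star C * B₁) := by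
    have e : star C * B₁ - star B₁ * C = -(star B₁ * C) + star C * B₁ := by abel
    rw [e]
    exact lem2 h0 hΦ E F hE hF hEF hEF0 hFE0 _ _ m2 n2
  rw [e0, L2, A12, A21, r1, r2]
  abel

private lemma diag
    (h0 : Φ 0 = 0)
    (hΦ : ∀ X Y : A, Φ (star X * Y - star Y * X) =
      (star (Φ X) * Y - star Y * Φ X) + (star X * Φ Y - star (Φ Y) * X))
    (hprime : ∀ a b : A, (∀ x : A, a * x * b = 0) → a = 0 ∨ b = 0)
    (E F : A) (hE : star E = E) (hF : star F = F) (hEF : E + F = 1)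
    (hEF0 : E * F = 0) (hFE0 : F * E = 0) (hE0 : E ≠ 0) (hF0 : F ≠ 0)
    (hidemE : E * E = E)
    (A₁ B₁ : A) (hA : E * A₁ * E = A₁) (hB : E * B₁ * E = B₁) :
    Φ (A₁ + B₁) = Φ A₁ + Φ B₁ := by
  have hA1 : E * A₁ = A₁ := by
    nth_rewrite 1 [← hA]
    rw [← mul_assoc, ← mul_assoc, hidemE, hA]
  have hA2 : A₁ * E = A₁ := by
    nth_rewrite 1 [← hA]
    rw [mul_assoc, mul_assoc, hidemE, ← mul_assoc, hA]
  have hB1 : E * B₁ = B₁ := by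
    nth_rewrite 1 [← hB]
    rw [← mul_assoc, ← mul_assoc, hidemE, hB]
  have hB2 : B₁ * E = B₁ := by
    nth_rewrite 1 [← hB]
    rw [mul_assoc, mul_assoc, hidemE, ← mul_assoc, hB]
  -- step 1 : F * T = 0
  have hFB : F * B₁ = 0 := by rw [← hB1, ← mul_assoc, hFE0, zero_mul]
  have hsBF : star B₁ * F = 0 := by
    have := congrArg star hFB; rwa [star_mul, hF, star_zero] at this
  have k1 := kill h0 hΦ F A₁ B₁ (by rw [hF]; exact hFB) hsBF
  have hFT : F * (Φ (A₁ + B₁) - Φ A₁ - Φ B₁) = 0 := by rw [← hF]; exact k1.1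
  -- step 2 : E * T = 0 via primeness and split probes C ∈ E𝒜F
  have hET : E * (Φ (A₁ + B₁) - Φ A₁ - Φ B₁) = 0 := by
    refine (hprime F (E * (Φ (A₁ + B₁) - Φ A₁ - Φ B₁)) (fun x => ?_)).resolve_left hF0
    have hC1 : E * (E * star x * F) = E * star x * F := by
      rw [← mul_assoc, ← mul_assoc, hidemE]
    have hC2 : (E * star x * F) * F = E * star x * F := by
      have hidemF : F * F = F := by
        have h1 : (E + F) * F = F := by rw [hEF, one_mul]
        rw [add_mul, hEF0, zero_add] at h1
        exact h1
      rw [mul_assoc, mul_assoc, hidemF, ← mul_assoc]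
    have hs1 := split_diag h0 hΦ hprime E F hE hF hEF hEF0 hFE0 hE0 hF0
      (E * star x * F) A₁ B₁ hC1 hC2 hA1 hA2 hB1 hB2
    have hC1' : E * ((Complex.I : ℂ) • (E * star x * F)) =
        (Complex.I : ℂ) • (E * star x * F) := by rw [mul_smul_comm, hC1]
    have hC2' : ((Complex.I : ℂ) • (E * star x * F)) * F =
        (Complex.I : ℂ) • (E * star x * F) := by rw [smul_mul_assoc, hC2]
    have hs2 := split_diag h0 hΦ hprime E F hE hF hEF hEF0 hFE0 hE0 hF0
      ((Complex.I : ℂ) • (E * star x * F)) A₁ B₁ hC1' hC2' hA1 hA2 hB1 hB2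
    have c1 := core hΦ (E * star x * F) A₁ B₁ hs1
    have c2 := core hΦ ((Complex.I : ℂ) • (E * star x * F)) A₁ B₁ hs2
    have k := (combine (E * star x * F) _ c1 c2).1
    have hsW : star (E * star x * F) = F * (x * E) := by
      rw [star_mul, star_mul, star_star, hE, hF]
    rw [hsW] at k
    calc F * x * (E * (Φ (A₁ + B₁) - Φ A₁ - Φ B₁))
        = F * (x * E) * (Φ (A₁ + B₁) - Φ A₁ - Φ B₁) := by
          rw [mul_assoc, mul_assoc, mul_assoc]
      _ = 0 := k
  have h3 : (1 : A) * (Φ (A₁ + B₁) - Φ A₁ - Φ B₁) = 0 := by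
    rw [← hEF, add_mul, hET, hFT, add_zero]
  rw [one_mul, sub_sub, sub_eq_zero] at h3
  exact h3

end Diag

/-- In a prime unital ∗-algebra over `ℂ` with nontrivial projection `P₁`
and `P₂ = I − P₁`, a nonlinear `⋄`-derivation `Φ` with `Φ(I/2)`, `Φ(iI/2)` self-adjoint
is additive on each diagonal Peirce component `𝒜_{ii}`, where the projection `P`
ranges over `P₁` and `P₂ = 1 − P₁`. -/
theorem stmt10 {𝒜 : Type*} [Ring 𝒜] [Algebra ℂ 𝒜] [StarRing 𝒜] [StarModule ℂ 𝒜]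
    (hprime : ∀ a b : 𝒜, (∀ x : 𝒜, a * x * b = 0) → a = 0 ∨ b = 0)
    (P₁ : 𝒜) (hP₁star : star P₁ = P₁) (hP₁idem : P₁ * P₁ = P₁)
    (hP₁ne0 : P₁ ≠ 0) (hP₁ne1 : P₁ ≠ 1)
    (Φ : 𝒜 → 𝒜)
    (hΦ : ∀ A B : 𝒜, Φ (star A * B - star B * A) =
      (star (Φ A) * B - star B * Φ A) + (star A * Φ B - star (Φ B) * A))
    (h1 : star (Φ (((1 : ℂ)/2) • (1 : 𝒜))) = Φ (((1 : ℂ)/2) • (1 : 𝒜)))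
    (h2 : star (Φ ((Complex.I/2) • (1 : 𝒜))) = Φ ((Complex.I/2) • (1 : 𝒜))) :
    ∀ P : 𝒜, (P = P₁ ∨ P = 1 - P₁) →
      ∀ A B : 𝒜, (∃ x : 𝒜, A = P * x * P) → (∃ x : 𝒜, B = P * x * P) →
        Φ (A + B) = Φ A + Φ B := by
  have h0 : Φ 0 = 0 := phi_zero hΦ
  have key : ∀ Q z : 𝒜, Q * Q = Q → Q * (Q * z * Q) * Q = Q * z * Q := by
    intro Q z h
    rw [show Q * (Q * z * Q) * Q = (Q * Q) * z * (Q * Q) by simp only [mul_assoc], h]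
  rintro P (rfl | rfl) A B ⟨x, rfl⟩ ⟨y, rfl⟩
  · -- case P = P₁ (note: `rfl` renames P₁ to P)
    have hQstar : star (1 - P : 𝒜) = 1 - P := by rw [star_sub, star_one, hP₁star]
    have hPQ : P * (1 - P) = 0 := by rw [mul_sub, mul_one, hP₁idem, sub_self]
    have hQP : (1 - P) * P = 0 := by rw [sub_mul, one_mul, hP₁idem, sub_self]
    have hQne0 : (1 - P : 𝒜) ≠ 0 := fun h => hP₁ne1 ((sub_eq_zero.mp h).symm)
    exact diag h0 hΦ hprime P (1 - P) hP₁star hQstar (add_sub_cancel P 1) hPQ hQP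
      hP₁ne0 hQne0 hP₁idem _ _ (key P x hP₁idem) (key P y hP₁idem)
  · -- case P = 1 - P₁
    have hQstar : star (1 - P₁ : 𝒜) = 1 - P₁ := by rw [star_sub, star_one, hP₁star]
    have hPQ : P₁ * (1 - P₁) = 0 := by rw [mul_sub, mul_one, hP₁idem, sub_self]
    have hQP : (1 - P₁) * P₁ = 0 := by rw [sub_mul, one_mul, hP₁idem, sub_self]
    have hQne0 : (1 - P₁ : 𝒜) ≠ 0 := fun h => hP₁ne1 ((sub_eq_zero.mp h).symm)
    have hQidem : (1 - P₁ : 𝒜) * (1 - P₁) = 1 - P₁ := by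
      rw [mul_sub, mul_one, hQP, sub_zero]
    exact diag h0 hΦ hprime (1 - P₁) P₁ hQstar hP₁star (sub_add_cancel 1 P₁) hQP hPQ
      hQne0 hP₁ne0 hQidem _ _ (key (1 - P₁) x hQidem) (key (1 - P₁) y hQidem)
end
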